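/- arXiv:0708.2897 — 6 statements merged into one kernel-verified Lean document; each statement's English description precedes it below -/
import Mathlib

section
/- For real numbers t_1, ..., t_M, one has 1 - cos(t_1 + ... + t_M) ≤ (2M - 1) · Σ_{i=1}^{M} (1 - cos(t_i)). -/
open Real Finset

lemma abs_sin_sum_le {ι : Type*} (s : Finset ι) (f : ι → ℝ) :
    |Real.sin (∑ i ∈ s, f i)| ≤ ∑ i ∈ s, |Real.sin (f i)| := by
  induction s using Finset.cons_induction with
  | empty => simp
  | cons a s ha ih =>
    rw [Finset.sum_cons, Finset.sum_cons, Real.sin_add]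
    calc |Real.sin (f a) * Real.cos (∑ i ∈ s, f i)
            + Real.cos (f a) * Real.sin (∑ i ∈ s, f i)|
        ≤ |Real.sin (f a) * Real.cos (∑ i ∈ s, f i)|
            + |Real.cos (f a) * Real.sin (∑ i ∈ s, f i)| := abs_add_le _ _
      _ ≤ |Real.sin (f a)| * 1 + 1 * |Real.sin (∑ i ∈ s, f i)| := by
          rw [abs_mul, abs_mul]
          gcongr
          · exact Real.abs_cos_le_one _
          · exact Real.abs_cos_le_one _
      _ ≤ |Real.sin (f a)| + ∑ i ∈ s, |Real.sin (f i)| := by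
          rw [mul_one, one_mul]; gcongr

/-- Basic cosine-splitting lemma: for reals `t 1, …, t M`,
`1 - cos (t 1 + ⋯ + t M) ≤ (2M - 1) Σ_i (1 - cos (t i))`. -/
theorem stmt1 (M : ℕ) (hM : 1 ≤ M) (t : Fin M → ℝ) :
    1 - Real.cos (∑ i, t i) ≤ (2 * (M : ℝ) - 1) * ∑ i, (1 - Real.cos (t i)) := by
  have hM1 : (1 : ℝ) ≤ M := by exact_mod_cast hM
  have key : 1 - Real.cos (∑ i, t i) ≤ (M : ℝ) * ∑ i, (1 - Real.cos (t i)) := by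
    have h2 : ∀ x : ℝ, 1 - Real.cos x = 2 * Real.sin (x / 2) ^ 2 := by
      intro x
      rw [Real.sin_sq_eq_half_sub (x / 2), show 2 * (x / 2) = x by ring]
      ring
    rw [h2]
    have h3 : ((∑ i, t i) / 2) = ∑ i, (t i / 2) := by
      rw [Finset.sum_div]
    rw [h3]
    have h4 := abs_sin_sum_le Finset.univ (fun i => t i / 2)
    have h5 : Real.sin (∑ i, t i / 2) ^ 2 ≤ (∑ i, |Real.sin (t i / 2)|) ^ 2 := by
      rw [← sq_abs]
      have hnn : 0 ≤ |Real.sin (∑ i, t i / 2)| := abs_nonneg _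
      exact pow_le_pow_left₀ hnn h4 2
    have h6 : (∑ i, |Real.sin (t i / 2)|) ^ 2
        ≤ (Finset.univ.card : ℝ) * ∑ i, |Real.sin (t i / 2)| ^ 2 :=
      sq_sum_le_card_mul_sum_sq
    simp only [Finset.card_univ, Fintype.card_fin] at h6
    calc 2 * Real.sin (∑ i, t i / 2) ^ 2
        ≤ 2 * ((M : ℝ) * ∑ i, |Real.sin (t i / 2)| ^ 2) := by
          have := le_trans h5 h6
          linarith
      _ = (M : ℝ) * ∑ i, (1 - Real.cos (t i)) := by
          rw [Finset.mul_sum, Finset.mul_sum, Finset.mul_sum]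
          congr 1
          ext i
          rw [sq_abs, h2 (t i)]
          ring
  have hsum : 0 ≤ ∑ i, (1 - Real.cos (t i)) := by
    apply Finset.sum_nonneg
    intro i _
    have := Real.cos_le_one (t i)
    linarith
  calc 1 - Real.cos (∑ i, t i) ≤ (M : ℝ) * ∑ i, (1 - Real.cos (t i)) := key
    _ ≤ (2 * (M : ℝ) - 1) * ∑ i, (1 - Real.cos (t i)) := by
        apply mul_le_mul_of_nonneg_right _ hsum
        linarith
end

section
/- Consider oriented (space-time) percolation on ℤ^d × ℤ₊ with bond occupation probability p. For bonds b, b' and vertices y, x, the event E(b, x; C̃^b(y)) — namely that b → x with x in the cluster C̃^b(y), and no pivotal bond b' for {b̄ → x} has its bottom endpoint in C̃^b(y) — is contained in the event { y → x } ∘ { b → x }, where ∘ denotes disjoint occurrence (the two connection events occur on disjoint bond sets). -/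
open MeasureTheory
open scoped ENNReal

/-- Space-time vertices of oriented percolation on `ℤ^d × ℤ`. -/
abbrev Vert (d : ℕ) := (Fin d → ℤ) × ℤ
/-- Oriented bonds. -/
abbrev Bond (d : ℕ) := Vert d × Vert d
/-- Bond configurations. -/
abbrev Config (d : ℕ) := Bond d → Bool

variable {d : ℕ}

/-- The bond `b` is occupied in `ω`. -/
def Occ (ω : Config d) (b : Bond d) : Prop := ω b = true

/-- `Conn ω u x`: `u → x`, i.e. there is a path of occupied oriented bonds from `u` to `x`. -/
inductive Conn (ω : Config d) : Vert d → Vert d → Prop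
  | refl (v : Vert d) : Conn ω v v
  | step {u v w : Vert d} : Occ ω (u, v) → Conn ω v w → Conn ω u w

/-- The connection event `{u → x}`. -/
def connEvent (u x : Vert d) : Set (Config d) := {ω | Conn ω u x}

/-- The event `{b → x}`: `b` is occupied and its top endpoint is connected to `x`. -/
def bondConnEvent (b : Bond d) (x : Vert d) : Set (Config d) :=
  {ω | Occ ω b ∧ Conn ω b.2 x}

/-- `E` occurs on the bond set `B` in configuration `ω`. -/
def OccursOn (E : Set (Config d)) (B : Set (Bond d)) (ω : Config d) : Prop :=
  ∀ ω' : Config d, (∀ b ∈ B, ω' b = ω b) → ω' ∈ E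

/-- Disjoint occurrence `E₁ ∘ E₂`. -/
def DisjOcc (E₁ E₂ : Set (Config d)) : Set (Config d) :=
  {ω | ∃ B₁ B₂ : Set (Bond d), Disjoint B₁ B₂ ∧ OccursOn E₁ B₁ ω ∧ OccursOn E₂ B₂ ω}

/-- Triple disjoint occurrence `E₁ ∘ E₂ ∘ E₃`. -/
def DisjOcc3 (E₁ E₂ E₃ : Set (Config d)) : Set (Config d) :=
  {ω | ∃ B₁ B₂ B₃ : Set (Bond d), Disjoint B₁ B₂ ∧ Disjoint B₁ B₃ ∧ Disjoint B₂ B₃ ∧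
    OccursOn E₁ B₁ ω ∧ OccursOn E₂ B₂ ω ∧ OccursOn E₃ B₃ ω}

/-- The double-connection event `{u ⇒ v}`: two bond-disjoint occupied paths from `u` to `v`. -/
def DoubleConn (u v : Vert d) : Set (Config d) := DisjOcc (connEvent u v) (connEvent u v)

/-- Configuration with the status of bond `b` set to `val`. -/
def flipBond (ω : Config d) (b : Bond d) (val : Bool) : Config d :=
  fun b' => if b' = b then val else ω b'

/-- `b ∈ piv(v, x)`: `b` is pivotal for `{v → x}` in `ω`. -/
def Pivotal (ω : Config d) (b : Bond d) (v x : Vert d) : Prop :=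
  Conn (flipBond ω b true) v x ∧ ¬ Conn (flipBond ω b false) v x

/-- Connection avoiding the bond `b`. -/
inductive ConnAvoid (ω : Config d) (b : Bond d) : Vert d → Vert d → Prop
  | refl (v : Vert d) : ConnAvoid ω b v v
  | step {u v w : Vert d} : (u, v) ≠ b → Occ ω (u, v) → ConnAvoid ω b v w →
      ConnAvoid ω b u w

/-- `C̃^b(y)`: vertices reachable from `y` without using the bond `b`. -/
def tilC (ω : Config d) (b : Bond d) (y : Vert d) : Set (Vert d) :=
  {x | ConnAvoid ω b y x}

/-- The lace-expansion event `E(b, x; C̃^b(y))`: `b → x` with `x ∈ C̃^b(y)` and no pivotal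
bond for `{b̄ → x}` has its bottom endpoint in `C̃^b(y)`. -/
def Eevent (b : Bond d) (x y : Vert d) : Set (Config d) :=
  {ω | Occ ω b ∧ Conn ω b.2 x ∧ x ∈ tilC ω b y ∧
    ∀ b' : Bond d, Pivotal ω b' b.2 x → b'.1 ∉ tilC ω b y}
namespace S4
variable {d : ℕ}

def rev (e : Bond d) : Bond d := (e.2, e.1)

@[simp] lemma rev_rev (e : Bond d) : rev (rev e) = e := rfl

lemma rev_inj : Function.Injective (rev (d := d)) :=
  Function.Involutive.injective rev_rev

/-- Walks: lists of consecutive edges in an edge set `E`. -/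
inductive W (E : Set (Bond d)) : Vert d → Vert d → List (Bond d) → Prop
  | nil (v) : W E v v []
  | cons {u v w : Vert d} {l} : (u, v) ∈ E → W E v w l → W E u w ((u, v) :: l)

lemma W.mono {E E' : Set (Bond d)} (h : E ⊆ E') {u x : Vert d} {l} (hw : W E u x l) :
    W E' u x l := by
  induction hw with
  | nil v => exact .nil v
  | cons he _ ih => exact .cons (h he) ih

lemma W.mem {E : Set (Bond d)} {u x : Vert d} {l} (hw : W E u x l) {e} (he : e ∈ l) : e ∈ E := by
  induction hw with
  | nil => cases he
  | cons h _ ih =>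
    rcases List.mem_cons.1 he with rfl | h'
    · exact h
    · exact ih h'

lemma W.of_forall {E E' : Set (Bond d)} {u x : Vert d} {l} (hw : W E u x l)
    (h : ∀ e ∈ l, e ∈ E') : W E' u x l := by
  induction hw with
  | nil v => exact .nil v
  | cons he _ ih =>
    exact .cons (h _ (List.mem_cons_self)) (ih fun e hee => h e (List.mem_cons_of_mem _ hee))

lemma W.append {E : Set (Bond d)} {u m x : Vert d} {l₁ l₂} (h₁ : W E u m l₁)
    (h₂ : W E m x l₂) : W E u x (l₁ ++ l₂) := by
  induction h₁ with
  | nil => exact h₂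
  | cons he _ ih => exact .cons he (ih h₂)

lemma W.split {E : Set (Bond d)} {u x : Vert d} {l₁ l₂} (h : W E u x (l₁ ++ l₂)) :
    ∃ m, W E u m l₁ ∧ W E m x l₂ := by
  induction l₁ generalizing u with
  | nil => exact ⟨u, .nil u, h⟩
  | cons e t ih =>
    cases h with
    | cons he hw =>
      obtain ⟨m, h1, h2⟩ := ih hw
      exact ⟨m, .cons he h1, h2⟩

lemma W.cons_inv {E : Set (Bond d)} {m x : Vert d} {e : Bond d} {l} (h : W E m x (e :: l)) :
    e.1 = m ∧ e ∈ E ∧ W E e.2 x l := by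
  cases h with
  | cons he hw => exact ⟨rfl, he, hw⟩

def Reach (E : Set (Bond d)) (u x : Vert d) : Prop := ∃ l, W E u x l

lemma W.reach_bot {E : Set (Bond d)} {u x : Vert d} {l} (h : W E u x l) {e} (he : e ∈ l) :
    Reach E u e.1 := by
  induction h with
  | nil => cases he
  | @cons u v w l hee hw ih =>
    rcases List.mem_cons.1 he with rfl | h'
    · exact ⟨[], .nil u⟩
    · obtain ⟨l', hl'⟩ := ih h'
      exact ⟨(u, v) :: l', .cons hee hl'⟩

lemma exists_min_walk {E : Set (Bond d)} {u x : Vert d} (h : Reach E u x) :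
    ∃ l, W E u x l ∧ ∀ l', W E u x l' → l.length ≤ l'.length := by
  classical
  obtain ⟨l, hl⟩ := h
  have hP : ∃ n, ∃ l : List (Bond d), W E u x l ∧ l.length = n := ⟨l.length, l, hl, rfl⟩
  obtain ⟨l₀, h₀, hlen⟩ := Nat.find_spec hP
  refine ⟨l₀, h₀, fun l' hl' => ?_⟩
  rw [hlen]
  by_contra hlt
  exact Nat.find_min hP (lt_of_not_ge hlt) ⟨l', hl', rfl⟩

lemma not_nodup_decomp {α : Type*} : ∀ (l : List α), ¬ l.Nodup →
    ∃ e l₁ l₂, l = l₁ ++ e :: l₂ ∧ e ∈ l₂ := by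
  intro l
  induction l with
  | nil => intro h; simp at h
  | cons a t ih =>
    intro h
    by_cases ha : a ∈ t
    · exact ⟨a, [], t, rfl, ha⟩
    · have hnt : ¬ t.Nodup := fun hn => h (List.nodup_cons.2 ⟨ha, hn⟩)
      obtain ⟨e, l₁, l₂, rfl, hel⟩ := ih hnt
      exact ⟨e, a :: l₁, l₂, rfl, hel⟩

lemma min_walk_nodup {E : Set (Bond d)} {u x : Vert d} {l} (hw : W E u x l)
    (hmin : ∀ l', W E u x l' → l.length ≤ l'.length) : l.Nodup := by
  by_contra hnd
  obtain ⟨e, s, t, heq, het⟩ := not_nodup_decomp l hnd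
  have key : ∀ l₁ l₂ : List (Bond d), e ∈ l₂ → l = l₁ ++ e :: l₂ → False := by
    intro l₁ l₂ hel₂ heq2
    rw [heq2] at hw hmin
    obtain ⟨m, hm1, hm2⟩ := W.split hw
    obtain ⟨he1, heE, hw2⟩ := W.cons_inv hm2
    obtain ⟨s', t', rfl⟩ := List.append_of_mem hel₂
    obtain ⟨m', hm'1, hm'2⟩ := W.split hw2
    obtain ⟨he1', _, hw4⟩ := W.cons_inv hm'2
    have hwshort : W E u x (l₁ ++ e :: t') := by
      refine hm1.append ?_
      rcases e with ⟨e1, e2⟩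
      cases he1
      exact W.cons heE hw4
    have hlen := hmin _ hwshort
    simp only [List.length_append, List.length_cons] at hlen
    omega
  exact key s t het heq

end S4
namespace S4
variable {d : ℕ}

/-- Occupied bonds as a set. -/
def OccSet (ω : Config d) : Set (Bond d) := {e | Occ ω e}

/-- Occupied bonds avoiding `b`. -/
def Gset (ω : Config d) (b : Bond d) : Set (Bond d) := {e | Occ ω e ∧ e ≠ b}

lemma conn_iff_walk {ω : Config d} {u x : Vert d} :
    Conn ω u x ↔ ∃ l, W (OccSet ω) u x l := by
  constructor
  · intro h
    induction h with
    | refl v => exact ⟨[], .nil v⟩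
    | step ho _ ih =>
      obtain ⟨l, hl⟩ := ih
      exact ⟨_, .cons ho hl⟩
  · rintro ⟨l, hl⟩
    induction hl with
    | nil v => exact .refl v
    | cons he _ ih => exact .step he ih

lemma connAvoid_iff_walk {ω : Config d} {b : Bond d} {u x : Vert d} :
    ConnAvoid ω b u x ↔ Reach (Gset ω b) u x := by
  constructor
  · intro h
    induction h with
    | refl v => exact ⟨[], .nil v⟩
    | step hne ho _ ih =>
      obtain ⟨l, hl⟩ := ih
      exact ⟨_, .cons ⟨ho, hne⟩ hl⟩
  · rintro ⟨l, hl⟩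
    induction hl with
    | nil v => exact .refl v
    | cons he _ ih => exact .step he.2 he.1 ih

lemma Conn.mono' {ω ω' : Config d} (h : ∀ e, Occ ω e → Occ ω' e) {u x : Vert d}
    (hc : Conn ω u x) : Conn ω' u x := by
  induction hc with
  | refl v => exact .refl v
  | step ho _ ih => exact .step (h _ ho) ih

lemma W.conn {E : Set (Bond d)} {ω' : Config d} {u x : Vert d} {l} (hw : W E u x l)
    (h : ∀ e ∈ l, Occ ω' e) : Conn ω' u x := by
  induction hw with
  | nil v => exact .refl v
  | cons _ _ ih =>
    exact .step (h _ (List.mem_cons_self)) (ih fun e he => h e (List.mem_cons_of_mem _ he))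

/-- Trim a walk so that no remaining edge has top endpoint equal to the start. -/
lemma W.trim_top {E : Set (Bond d)} {u x : Vert d} :
    ∀ n {l : List (Bond d)}, l.length ≤ n → W E u x l →
    ∃ l', W E u x l' ∧ (∀ e ∈ l', e ∈ l) ∧ ∀ e ∈ l', e.2 ≠ u := by
  intro n
  induction n with
  | zero =>
    intro l hn hw
    have : l = [] := List.length_eq_zero_iff.1 (Nat.le_zero.1 hn)
    subst this
    exact ⟨[], hw, by simp, by simp⟩
  | succ n ih =>
    intro l hn hw
    by_cases hex : ∃ e ∈ l, e.2 = u
    · obtain ⟨e, hel, he2⟩ := hex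
      obtain ⟨s, t, rfl⟩ := List.append_of_mem hel
      obtain ⟨m, _, hm2⟩ := W.split hw
      obtain ⟨_, _, hw2⟩ := W.cons_inv hm2
      rw [he2] at hw2
      have hlen : t.length ≤ n := by
        have := hn
        simp only [List.length_append, List.length_cons] at this
        omega
      obtain ⟨l', h1, h2, h3⟩ := ih hlen hw2
      exact ⟨l', h1, fun e he => by
        have := h2 e he
        simp only [List.mem_append, List.mem_cons]
        tauto, h3⟩
    · push_neg at hex
      exact ⟨l, hw, fun e he => he, hex⟩

section Cross
variable {E : Set (Bond d)} {S : Set (Vert d)}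

lemma existsCross {u x : Vert d} {l} (hw : W E u x l) (hu : u ∈ S) (hx : x ∉ S) :
    ∃ e ∈ l, e.1 ∈ S ∧ e.2 ∉ S := by
  induction l generalizing u with
  | nil => cases hw; exact absurd hu hx
  | cons e t ih =>
    obtain ⟨he1, heE, hw2⟩ := W.cons_inv hw
    by_cases hv : e.2 ∈ S
    · obtain ⟨f, h1, h2⟩ := ih hw2 hv
      exact ⟨f, List.mem_cons_of_mem _ h1, h2⟩
    · exact ⟨e, List.mem_cons_self, he1 ▸ hu, hv⟩

lemma allOut {u x : Vert d} {l} (hw : W E u x l) (hu : u ∉ S)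
    (hcl : ∀ e ∈ l, e.2 ∈ S → e.1 ∈ S) : ∀ e ∈ l, e.1 ∉ S ∧ e.2 ∉ S := by
  induction l generalizing u with
  | nil => simp
  | cons e t ih =>
    obtain ⟨he1, heE, hw2⟩ := W.cons_inv hw
    have hv : e.2 ∉ S := fun hv => hu (he1 ▸ hcl _ (List.mem_cons_self) hv)
    intro f hf
    rcases List.mem_cons.1 hf with rfl | h'
    · exact ⟨he1 ▸ hu, hv⟩
    · exact ih hw2 hv (fun g hg hs => hcl g (List.mem_cons_of_mem _ hg) hs) f h'

lemma uniqueCross {u x : Vert d} {l} (hw : W E u x l) (hu : u ∈ S) (hx : x ∉ S)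
    (hcl : ∀ e ∈ l, e.2 ∈ S → e.1 ∈ S) :
    ∃ f, f ∈ l ∧ f.1 ∈ S ∧ f.2 ∉ S ∧ ∀ e ∈ l, e.1 ∈ S → e.2 ∉ S → e = f := by
  induction l generalizing u with
  | nil => cases hw; exact absurd hu hx
  | cons e t ih =>
    obtain ⟨he1, heE, hw2⟩ := W.cons_inv hw
    by_cases hv : e.2 ∈ S
    · obtain ⟨f, h1, h2, h3, h4⟩ := ih hw2 hv
        (fun g hg hs => hcl g (List.mem_cons_of_mem _ hg) hs)
      refine ⟨f, List.mem_cons_of_mem _ h1, h2, h3, ?_⟩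
      intro g hg' h5 h6
      rcases List.mem_cons.1 hg' with rfl | h'
      · exact absurd hv h6
      · exact h4 g h' h5 h6
    · refine ⟨e, List.mem_cons_self, he1 ▸ hu, hv, ?_⟩
      intro g hg' h5 h6
      rcases List.mem_cons.1 hg' with rfl | h'
      · rfl
      · exact absurd h5 (allOut hw2 hv
          (fun g hg hs => hcl g (List.mem_cons_of_mem _ hg) hs) g h').1

end Cross

/-- The residual edge set w.r.t. a walk `ρ`. -/
def Rres (G : Set (Bond d)) (ρ : List (Bond d)) : Set (Bond d) :=
  {f | (f ∈ G ∧ f ∉ ρ) ∨ rev f ∈ ρ}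

/-- Key claim: the residual graph connects `y` to `x`. -/
lemma claim {G : Set (Bond d)} {v x y : Vert d} {ρ : List (Bond d)}
    (hρ : W G v x ρ) (hπ : Reach G y x)
    (hcut : ∀ e : Bond d, Reach G y e.1 → ∃ l, W G v x l ∧ e ∉ l) :
    Reach (Rres G ρ) y x := by
  by_contra hx
  set S : Set (Vert d) := {z | Reach (Rres G ρ) y z} with hS
  have hyS : y ∈ S := ⟨[], .nil y⟩
  have hxS : x ∉ S := hx
  have hstep : ∀ f : Bond d, f ∈ Rres G ρ → f.1 ∈ S → f.2 ∈ S := by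
    intro f hf h1
    obtain ⟨l, hl⟩ := h1
    refine ⟨l ++ [f], hl.append ?_⟩
    have : W (Rres G ρ) f.1 f.2 [(f.1, f.2)] := .cons (by rwa [Prod.mk.eta]) (.nil f.2)
    rwa [Prod.mk.eta] at this
  have factB : ∀ e ∈ ρ, e.2 ∈ S → e.1 ∈ S := by
    intro e he h2
    exact hstep (rev e) (Or.inr (by simpa using he)) h2
  have factA : ∀ g : Bond d, g ∈ G → g ∉ ρ → g.1 ∈ S → g.2 ∈ S := by
    intro g hg hgρ h1
    exact hstep g (Or.inl ⟨hg, hgρ⟩) h1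
  obtain ⟨π, hπw⟩ := hπ
  obtain ⟨g, hgπ, hg1, hg2⟩ := existsCross hπw hyS hxS
  have hgG : g ∈ G := hπw.mem hgπ
  by_cases hvS : v ∈ S
  · obtain ⟨f, hfρ, hf1, hf2, huniq⟩ := uniqueCross hρ hvS hxS factB
    have hkey : ∀ h : Bond d, h ∈ G → h.1 ∈ S → h.2 ∉ S → h = f := by
      intro h hG h1 h2
      by_cases hρm : h ∈ ρ
      · exact huniq h hρm h1 h2
      · exact absurd (factA h hG hρm h1) h2
    have hgf : g = f := hkey g hgG hg1 hg2
    have hreach : Reach G y f.1 := hgf ▸ hπw.reach_bot hgπ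
    obtain ⟨l, hlW, hle⟩ := hcut f hreach
    obtain ⟨g', hg'l, hg'1, hg'2⟩ := existsCross hlW hvS hxS
    have : g' = f := hkey g' (hlW.mem hg'l) hg'1 hg'2
    exact hle (this ▸ hg'l)
  · have hall := allOut hρ hvS factB
    by_cases hgρ : g ∈ ρ
    · exact (hall g hgρ).1 hg1
    · exact hg2 (factA g hgG hgρ hg1)

end S4
namespace S4
variable {d : ℕ}

noncomputable def outD (K : Finset (Bond d)) (z : Vert d) : ℕ :=
  (K.filter fun e => e.1 = z).card

noncomputable def inD (K : Finset (Bond d)) (z : Vert d) : ℕ :=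
  (K.filter fun e => e.2 = z).card

lemma filter_erase' (K : Finset (Bond d)) (e : Bond d) (p : Bond d → Prop) [DecidablePred p] :
    (K.erase e).filter p = (K.filter p).erase e := by
  ext f
  simp only [Finset.mem_erase, Finset.mem_filter]
  tauto

lemma deg_erase (K : Finset (Bond d)) {e : Bond d} (he : e ∈ K) (p : Bond d → Prop)
    [DecidablePred p] :
    ((K.erase e).filter p).card + (if p e then 1 else 0) = (K.filter p).card := by
  rw [filter_erase']
  by_cases hp : p e
  · rw [if_pos hp, Finset.card_erase_of_mem (Finset.mem_filter.2 ⟨he, hp⟩)]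
    have : 0 < (K.filter p).card := Finset.card_pos.2 ⟨e, Finset.mem_filter.2 ⟨he, hp⟩⟩
    omega
  · rw [if_neg hp, Finset.erase_eq_of_notMem (fun h => hp (Finset.mem_filter.1 h).2)]
    omega

lemma outD_erase (K : Finset (Bond d)) {e : Bond d} (he : e ∈ K) (z : Vert d) :
    outD (K.erase e) z + (if e.1 = z then 1 else 0) = outD K z :=
  deg_erase K he _

lemma inD_erase (K : Finset (Bond d)) {e : Bond d} (he : e ∈ K) (z : Vert d) :
    inD (K.erase e) z + (if e.2 = z then 1 else 0) = inD K z :=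
  deg_erase K he _

/-- Trail extraction from an edge set with positive out-balance at the start. -/
lemma EL : ∀ (n : ℕ) (K : Finset (Bond d)), K.card ≤ n → ∀ (a x : Vert d),
    inD K a < outD K a → (∀ z : Vert d, z ≠ x → z ≠ a → inD K z ≤ outD K z) →
    ∃ l : List (Bond d), l.Nodup ∧ (∀ e ∈ l, e ∈ K) ∧ W {f | f ∈ K} a x l := by
  intro n
  induction n with
  | zero =>
    intro K hK a x hst _
    have h1 : outD K a ≤ K.card := Finset.card_filter_le _ _
    omega
  | succ n ih =>
    intro K hK a x hst hmid
    by_cases hax : a = x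
    · subst hax
      exact ⟨[], List.nodup_nil, by simp, .nil a⟩
    have hpos : 0 < outD K a := lt_of_le_of_lt (Nat.zero_le _) hst
    obtain ⟨e, hem⟩ := Finset.card_pos.1 hpos
    rw [Finset.mem_filter] at hem
    obtain ⟨heK, he1⟩ := hem
    by_cases hex : e.2 = x
    · refine ⟨[e], by simp, by simp [heK], ?_⟩
      rcases e with ⟨e1, e2⟩
      simp only at he1 hex
      subst he1; subst hex
      exact .cons (show (e1, e2) ∈ {f | f ∈ K} from heK) (.nil e2)
    · have hcard : (K.erase e).card ≤ n := by
        have h0 : 0 < K.card := Finset.card_pos.2 ⟨e, heK⟩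
        rw [Finset.card_erase_of_mem heK]
        omega
      have hworth : inD (K.erase e) e.2 < outD (K.erase e) e.2 := by
        have h1 := outD_erase K heK e.2
        have h2 := inD_erase K heK e.2
        rw [if_pos rfl] at h2
        by_cases hwa : e.2 = a
        · rw [hwa] at h1 h2 ⊢
          rw [he1, if_pos rfl] at h1
          omega
        · rw [he1, if_neg (fun h => hwa h.symm)] at h1
          have h3 := hmid e.2 hex hwa
          omega
      have hmid' : ∀ z : Vert d, z ≠ x → z ≠ e.2 → inD (K.erase e) z ≤ outD (K.erase e) z := by
        intro z hzx hzw
        have h1 := outD_erase K heK z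
        have h2 := inD_erase K heK z
        rw [if_neg (fun h => hzw h.symm)] at h2
        by_cases hza : z = a
        · subst hza
          rw [he1, if_pos rfl] at h1
          omega
        · rw [he1, if_neg (fun h => hza h.symm)] at h1
          have h3 := hmid z hzx hza
          omega
      obtain ⟨l, hnd, hsub, hwl⟩ := ih (K.erase e) hcard e.2 x hworth hmid'
      refine ⟨e :: l, ?_, ?_, ?_⟩
      · refine List.nodup_cons.2 ⟨fun hel => ?_, hnd⟩
        exact (Finset.notMem_erase e K) (hsub e hel)
      · intro f hf
        rcases List.mem_cons.1 hf with rfl | h'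
        · exact heK
        · exact Finset.mem_of_mem_erase (hsub f h')
      · have hmono : ({f | f ∈ K.erase e} : Set (Bond d)) ⊆ {f | f ∈ K} := by
          intro f hf
          exact Finset.mem_of_mem_erase hf
        rcases e with ⟨e1, e2⟩
        simp only at he1
        subst he1
        exact .cons (show (e1, e2) ∈ {f | f ∈ K} from heK) ((hwl.mono hmono))

end S4
namespace S4
variable {d : ℕ}

def cOut (l : List (Bond d)) (z : Vert d) : ℕ := l.countP fun e => decide (e.1 = z)
def cIn (l : List (Bond d)) (z : Vert d) : ℕ := l.countP fun e => decide (e.2 = z)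

lemma cOut_nil (z : Vert d) : cOut [] z = 0 := rfl
lemma cIn_nil (z : Vert d) : cIn [] z = 0 := rfl

lemma cOut_cons (e : Bond d) (t : List (Bond d)) (z : Vert d) :
    cOut (e :: t) z = cOut t z + (if e.1 = z then 1 else 0) := by
  simp [cOut, List.countP_cons]

lemma cIn_cons (e : Bond d) (t : List (Bond d)) (z : Vert d) :
    cIn (e :: t) z = cIn t z + (if e.2 = z then 1 else 0) := by
  simp [cIn, List.countP_cons]

lemma walk_bal {E : Set (Bond d)} {x : Vert d} :
    ∀ {l : List (Bond d)} {u : Vert d}, W E u x l → ∀ z : Vert d,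
    (cOut l z : ℤ) - cIn l z = (if u = z then 1 else 0) - (if x = z then 1 else 0) := by
  intro l
  induction l with
  | nil =>
    intro u hw z
    cases hw
    simp [cOut_nil, cIn_nil]
  | cons e t ih =>
    intro u hw z
    obtain ⟨he1, _, hw2⟩ := W.cons_inv hw
    have ih' := ih hw2 z
    rw [cOut_cons, cIn_cons, he1]
    push_cast
    split_ifs at ih' ⊢ <;> omega

lemma outD_toFinset {l : List (Bond d)} (h : l.Nodup) (z : Vert d) :
    outD l.toFinset z = cOut l z := by
  induction l with
  | nil => simp [outD, cOut]
  | cons e t ih =>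
    obtain ⟨het, hnd⟩ := List.nodup_cons.1 h
    have ih' := ih hnd
    rw [List.toFinset_cons, cOut_cons]
    unfold outD at ih' ⊢
    rw [Finset.filter_insert]
    by_cases he : e.1 = z
    · rw [if_pos he, Finset.card_insert_of_notMem (fun hm => het
        (List.mem_toFinset.1 (Finset.mem_filter.1 hm).1)), if_pos he, ih']
    · rw [if_neg he, if_neg he, ih']
      omega

lemma inD_toFinset {l : List (Bond d)} (h : l.Nodup) (z : Vert d) :
    inD l.toFinset z = cIn l z := by
  induction l with
  | nil => simp [inD, cIn]
  | cons e t ih =>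
    obtain ⟨het, hnd⟩ := List.nodup_cons.1 h
    have ih' := ih hnd
    rw [List.toFinset_cons, cIn_cons]
    unfold inD at ih' ⊢
    rw [Finset.filter_insert]
    by_cases he : e.2 = z
    · rw [if_pos he, Finset.card_insert_of_notMem (fun hm => het
        (List.mem_toFinset.1 (Finset.mem_filter.1 hm).1)), if_pos he, ih']
    · rw [if_neg he, if_neg he, ih']
      omega

lemma deg_union {A B : Finset (Bond d)} (h : Disjoint A B) (p : Bond d → Prop)
    [DecidablePred p] : ((A ∪ B).filter p).card = (A.filter p).card + (B.filter p).card := by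
  rw [Finset.filter_union]
  exact Finset.card_union_of_disjoint
    (h.mono (Finset.filter_subset _ _) (Finset.filter_subset _ _))

lemma deg_sdiff {A B : Finset (Bond d)} (h : B ⊆ A) (p : Bond d → Prop) [DecidablePred p] :
    ((A \ B).filter p).card + (B.filter p).card = (A.filter p).card := by
  have hfs : (A \ B).filter p = A.filter p \ B.filter p := by
    ext f
    simp only [Finset.mem_sdiff, Finset.mem_filter]
    tauto
  rw [hfs, Finset.card_sdiff_of_subset (Finset.filter_subset_filter _ h)]
  have : (B.filter p).card ≤ (A.filter p).card :=
    Finset.card_le_card (Finset.filter_subset_filter _ h)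
  omega

lemma outD_image_rev (F : Finset (Bond d)) (z : Vert d) :
    outD (F.image rev) z = inD F z := by
  unfold outD inD
  have h : (F.image rev).filter (fun e => e.1 = z) = (F.filter fun e => e.2 = z).image rev := by
    ext f
    simp only [Finset.mem_filter, Finset.mem_image]
    constructor
    · rintro ⟨⟨g, hg, rfl⟩, h1⟩
      exact ⟨g, ⟨hg, h1⟩, rfl⟩
    · rintro ⟨g, ⟨hg, h2⟩, rfl⟩
      exact ⟨⟨g, hg, rfl⟩, h2⟩
  rw [h, Finset.card_image_of_injective _ rev_inj]

lemma inD_image_rev (F : Finset (Bond d)) (z : Vert d) :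
    inD (F.image rev) z = outD F z := by
  unfold outD inD
  have h : (F.image rev).filter (fun e => e.2 = z) = (F.filter fun e => e.1 = z).image rev := by
    ext f
    simp only [Finset.mem_filter, Finset.mem_image]
    constructor
    · rintro ⟨⟨g, hg, rfl⟩, h1⟩
      exact ⟨g, ⟨hg, h1⟩, rfl⟩
    · rintro ⟨g, ⟨hg, h2⟩, rfl⟩
      exact ⟨⟨g, hg, rfl⟩, h2⟩
  rw [h, Finset.card_image_of_injective _ rev_inj]

/-- Main graph lemma: edge-disjoint walks from `y` and from `v` to `x`. -/
lemma main {G : Set (Bond d)} {v x y : Vert d}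
    (hv : Reach G v x) (hy : Reach G y x)
    (hcut : ∀ e : Bond d, Reach G y e.1 → ∃ l, W G v x l ∧ e ∉ l) :
    ∃ l₁ l₂, W G y x l₁ ∧ W G v x l₂ ∧ ∀ e ∈ l₁, e ∉ l₂ := by
  classical
  by_cases hvx : v = x
  · obtain ⟨π, hπ⟩ := hy
    exact ⟨π, [], hπ, hvx ▸ W.nil v, by simp⟩
  by_cases hyx : y = x
  · obtain ⟨ρ, hρ⟩ := hv
    exact ⟨[], ρ, hyx ▸ W.nil y, hρ, by simp⟩
  obtain ⟨ρ, hρw, hρmin⟩ := exists_min_walk hv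
  have hρnd : ρ.Nodup := min_walk_nodup hρw hρmin
  have hreach : Reach (Rres G ρ) y x := claim hρw hy hcut
  obtain ⟨α, hαw, hαmin⟩ := exists_min_walk hreach
  have hαnd : α.Nodup := min_walk_nodup hαw hαmin
  set p : Bond d → Prop := fun f => f ∈ G ∧ f ∉ ρ with hp
  set Fwd : Finset (Bond d) := α.toFinset.filter p with hFwd
  set Bwd : Finset (Bond d) := α.toFinset.filter (fun f => ¬ p f) with hBwd
  set Canc : Finset (Bond d) := Bwd.image rev with hCanc
  set K : Finset (Bond d) := (ρ.toFinset \ Canc) ∪ Fwd with hK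
  have hCancSub : Canc ⊆ ρ.toFinset := by
    intro g hg
    obtain ⟨f, hf, rfl⟩ := Finset.mem_image.1 hg
    obtain ⟨hfα, hnp⟩ := Finset.mem_filter.1 hf
    have hfR : f ∈ Rres G ρ := hαw.mem (List.mem_toFinset.1 hfα)
    rcases hfR with h | h
    · exact absurd h hnp
    · exact List.mem_toFinset.2 h
  have hdisj : Disjoint (ρ.toFinset \ Canc) Fwd := by
    rw [Finset.disjoint_left]
    intro f hf1 hf2
    have h1 : f ∈ ρ := List.mem_toFinset.1 (Finset.mem_sdiff.1 hf1).1
    exact (Finset.mem_filter.1 hf2).2.2 h1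
  have hKsubG : ∀ f ∈ K, f ∈ G := by
    intro f hf
    rcases Finset.mem_union.1 hf with h | h
    · exact hρw.mem (List.mem_toFinset.1 (Finset.mem_sdiff.1 h).1)
    · exact (Finset.mem_filter.1 h).2.1
  -- balance identity for K
  have hKbal : ∀ z : Vert d, (outD K z : ℤ) - inD K z =
      ((if v = z then 1 else 0) - (if x = z then 1 else 0)) +
      ((if y = z then 1 else 0) - (if x = z then 1 else 0)) := by
    intro z
    have h1o : outD K z = outD (ρ.toFinset \ Canc) z + outD Fwd z := deg_union hdisj _
    have h1i : inD K z = inD (ρ.toFinset \ Canc) z + inD Fwd z := deg_union hdisj _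
    have h2o : outD (ρ.toFinset \ Canc) z + outD Canc z = outD ρ.toFinset z :=
      deg_sdiff hCancSub _
    have h2i : inD (ρ.toFinset \ Canc) z + inD Canc z = inD ρ.toFinset z :=
      deg_sdiff hCancSub _
    have h3o : outD Fwd z + outD Bwd z = outD α.toFinset z := by
      unfold outD
      rw [hFwd, hBwd, Finset.filter_comm, Finset.filter_comm (fun f => ¬ p f)]
      exact Finset.card_filter_add_card_filter_not _
    have h3i : inD Fwd z + inD Bwd z = inD α.toFinset z := by
      unfold inD
      rw [hFwd, hBwd, Finset.filter_comm, Finset.filter_comm (fun f => ¬ p f)]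
      exact Finset.card_filter_add_card_filter_not _
    have h4o : outD Canc z = inD Bwd z := outD_image_rev _ _
    have h4i : inD Canc z = outD Bwd z := inD_image_rev _ _
    have h5o : outD ρ.toFinset z = cOut ρ z := outD_toFinset hρnd z
    have h5i : inD ρ.toFinset z = cIn ρ z := inD_toFinset hρnd z
    have h6o : outD α.toFinset z = cOut α z := outD_toFinset hαnd z
    have h6i : inD α.toFinset z = cIn α z := inD_toFinset hαnd z
    have hbρ := walk_bal hρw z
    have hbα := walk_bal hαw z
    split_ifs at hbρ hbα ⊢ <;> omega
  -- first extraction: walk from v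
  have h0xv : ¬ (x = v) := fun h => hvx h.symm
  have hstart : inD K v < outD K v := by
    have := hKbal v
    by_cases hyv : y = v
    · simp [h0xv, hyv] at this
      omega
    · simp [h0xv, hyv] at this
      omega
  have hmid : ∀ z : Vert d, z ≠ x → z ≠ v → inD K z ≤ outD K z := by
    intro z hzx hzv
    have := hKbal z
    have hv' : ¬ (v = z) := fun h => hzv h.symm
    have hx' : ¬ (x = z) := fun h => hzx h.symm
    by_cases hyz : y = z
    · simp [hv', hx', hyz] at this
      omega
    · simp [hv', hx', hyz] at this
      omega
  obtain ⟨l₂, hl₂nd, hl₂sub, hl₂w⟩ := EL K.card K le_rfl v x hstart hmid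
  have hl₂G : W G v x l₂ := hl₂w.mono (fun f hf => hKsubG f hf)
  have hl₂K : l₂.toFinset ⊆ K := fun f hf => hl₂sub f (List.mem_toFinset.1 hf)
  -- second extraction: walk from y in the complement
  have hK₂bal : ∀ z : Vert d, (outD (K \ l₂.toFinset) z : ℤ) - inD (K \ l₂.toFinset) z =
      (if y = z then 1 else 0) - (if x = z then 1 else 0) := by
    intro z
    have h1o : outD (K \ l₂.toFinset) z + outD l₂.toFinset z = outD K z := deg_sdiff hl₂K _
    have h1i : inD (K \ l₂.toFinset) z + inD l₂.toFinset z = inD K z := deg_sdiff hl₂K _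
    have h2o : outD l₂.toFinset z = cOut l₂ z := outD_toFinset hl₂nd z
    have h2i : inD l₂.toFinset z = cIn l₂ z := inD_toFinset hl₂nd z
    have hb := walk_bal hl₂w z
    have hk := hKbal z
    split_ifs at hb hk ⊢ <;> omega
  have hstart2 : inD (K \ l₂.toFinset) y < outD (K \ l₂.toFinset) y := by
    have := hK₂bal y
    simp [show ¬ (x = y) from fun h => hyx h.symm] at this
    omega
  have hmid2 : ∀ z : Vert d, z ≠ x → z ≠ y →
      inD (K \ l₂.toFinset) z ≤ outD (K \ l₂.toFinset) z := by
    intro z hzx hzy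
    have := hK₂bal z
    simp [show ¬ (y = z) from fun h => hzy h.symm,
      show ¬ (x = z) from fun h => hzx h.symm] at this
    omega
  obtain ⟨l₁, hl₁nd, hl₁sub, hl₁w⟩ :=
    EL (K \ l₂.toFinset).card (K \ l₂.toFinset) le_rfl y x hstart2 hmid2
  have hl₁G : W G y x l₁ := W.mono (E := {f | f ∈ K \ l₂.toFinset}) (fun f (hf : f ∈ K \ l₂.toFinset) => hKsubG f (Finset.mem_sdiff.1 hf).1) hl₁w
  refine ⟨l₁, l₂, hl₁G, hl₂G, ?_⟩
  intro e he₁ he₂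
  have h1 := hl₁sub e he₁
  exact (Finset.mem_sdiff.1 h1).2 (List.mem_toFinset.2 he₂)

end S4
/-- Inclusion (Esup): `E(b, x; C̃^b(y)) ⊆ {y → x} ∘ {b → x}`. -/
theorem stmt4 {d : ℕ} (b : Bond d) (x y : Vert d) :
    Eevent b x y ⊆ DisjOcc (connEvent y x) (bondConnEvent b x) := by
  classical
  intro ω hω
  obtain ⟨hb, hconn, hxC, hpiv⟩ := hω
  set G : Set (Bond d) := S4.Gset ω b with hG
  have hbridge : ∀ z, z ∈ tilC ω b y ↔ S4.Reach G y z := fun z => S4.connAvoid_iff_walk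
  have hy : S4.Reach G y x := (hbridge x).1 hxC
  have hv : S4.Reach G b.2 x := by
    obtain ⟨l, hl⟩ := S4.conn_iff_walk.1 hconn
    obtain ⟨l', hl', hsub, htop⟩ := S4.W.trim_top l.length le_rfl hl
    exact ⟨l', hl'.of_forall (fun e he =>
      ⟨hl'.mem he, fun heb => htop e he (by rw [heb])⟩)⟩
  have hcut : ∀ e : Bond d, S4.Reach G y e.1 → ∃ l, S4.W G b.2 x l ∧ e ∉ l := by
    intro e hre
    have h1 : e.1 ∈ tilC ω b y := (hbridge e.1).2 hre
    have hnp : ¬ Pivotal ω e b.2 x := fun hp => hpiv e hp h1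
    have hct : Conn (flipBond ω e true) b.2 x := by
      refine S4.Conn.mono' (fun f hf => ?_) hconn
      unfold Occ flipBond at *
      by_cases hfe : f = e <;> simp [hfe, hf]
    have hcf : Conn (flipBond ω e false) b.2 x := by
      by_contra hc
      exact hnp ⟨hct, hc⟩
    obtain ⟨l, hl⟩ := S4.conn_iff_walk.1 hcf
    obtain ⟨l', hl', hsub, htop⟩ := S4.W.trim_top l.length le_rfl hl
    have hfe : ∀ f ∈ l', Occ ω f ∧ f ≠ e := by
      intro f hf
      have hocc : Occ (flipBond ω e false) f := hl'.mem hf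
      unfold Occ flipBond at hocc
      by_cases h : f = e
      · rw [if_pos h] at hocc
        exact absurd hocc (by simp)
      · rw [if_neg h] at hocc
        exact ⟨hocc, h⟩
    refine ⟨l', hl'.of_forall (fun f hf =>
      ⟨(hfe f hf).1, fun hfb => htop f hf (by rw [hfb])⟩), fun hmem => (hfe e hmem).2 rfl⟩
  obtain ⟨l₁, l₂, hw1, hw2, hdisj⟩ := S4.main hv hy hcut
  refine ⟨{f | f ∈ l₁}, insert b {f | f ∈ l₂}, ?_, ?_, ?_⟩
  · rw [Set.disjoint_left]
    intro f hf1 hf2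
    have hfG : f ∈ G := hw1.mem hf1
    rcases Set.mem_insert_iff.1 hf2 with rfl | hf2'
    · exact hfG.2 rfl
    · exact hdisj f hf1 hf2'
  · intro ω' hagree
    exact S4.W.conn hw1 (fun e he => by
      have h1 : ω' e = ω e := hagree e he
      have h2 : Occ ω e := (hw1.mem he).1
      unfold Occ at *
      rw [h1]
      exact h2)
  · intro ω' hagree
    refine ⟨?_, ?_⟩
    · have h1 : ω' b = ω b := hagree b (Set.mem_insert _ _)
      unfold Occ at *
      rw [h1]
      exact hb
    · exact S4.W.conn hw2 (fun e he => by
        have h1 : ω' e = ω e := hagree e (Set.mem_insert_of_mem _ he)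
        have h2 : Occ ω e := (hw2.mem he).1
        unfold Occ at *
        rw [h1]
        exact h2)
end

section
/- In oriented percolation on ℤ^d × ℤ₊, for vertices o, v, x: the event {o ⇒ v} ∩ {o → x} (where o ⇒ v means o is doubly connected to v) is contained in the union over vertices u of the triple disjoint occurrence { o → u → v } ∘ { o → v } ∘ { u → x }. -/
open MeasureTheory
open scoped ENNReal

variable {d : ℕ}

section Aux

/-- Paths recorded as lists of bonds. -/
inductive BPath (ω : Config d) : Vert d → Vert d → List (Bond d) → Prop
  | refl (v : Vert d) : BPath ω v v []
  | step {u v w : Vert d} {L : List (Bond d)} :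
      Occ ω (u, v) → BPath ω v w L → BPath ω u w ((u, v) :: L)

lemma conn_of_bpath {ω : Config d} {a b : Vert d} {L : List (Bond d)}
    (h : BPath ω a b L) : Conn ω a b := by
  induction h with
  | refl v => exact Conn.refl v
  | step h _ ih => exact Conn.step h ih

lemma bpath_of_conn {ω : Config d} {a b : Vert d} (h : Conn ω a b) :
    ∃ L, BPath ω a b L := by
  induction h with
  | refl v => exact ⟨[], BPath.refl v⟩
  | step h _ ih => obtain ⟨L, hL⟩ := ih; exact ⟨_, BPath.step h hL⟩

lemma bpath_congr {ω ω' : Config d} {a b : Vert d} {L : List (Bond d)}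
    (h : BPath ω a b L) (hagree : ∀ c ∈ L, ω' c = ω c) : BPath ω' a b L := by
  induction h with
  | refl v => exact BPath.refl v
  | step h hp ih =>
      refine BPath.step ?_ (ih fun c hc => hagree c (List.mem_cons_of_mem _ hc))
      show ω' _ = true
      rw [hagree _ List.mem_cons_self]; exact h

lemma bpath_occ {ω : Config d} {a b : Vert d} {L : List (Bond d)}
    (h : BPath ω a b L) : ∀ c ∈ L, Occ ω c := by
  induction h with
  | refl v => intro c hc; simp at hc
  | step h hp ih =>
      intro c hc
      rcases List.mem_cons.mp hc with rfl | hc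
      · exact h
      · exact ih c hc

/-- Split a path at a vertex it visits. -/
lemma bpath_split {ω : Config d} {a b u : Vert d} {L : List (Bond d)}
    (h : BPath ω a b L) (hu : u = a ∨ ∃ c ∈ L, c.2 = u) :
    ∃ L₁ L₂, BPath ω a u L₁ ∧ BPath ω u b L₂ ∧
      (∀ c ∈ L₁, c ∈ L) ∧ (∀ c ∈ L₂, c ∈ L) := by
  induction h with
  | refl v =>
      rcases hu with rfl | ⟨c, hc, _⟩
      · exact ⟨[], [], BPath.refl _, BPath.refl _, by simp, by simp⟩
      · simp at hc
  | @step p q w L hocc hp ih =>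
      rcases hu with rfl | ⟨c, hc, hc2⟩
      · exact ⟨[], (u, q) :: L, BPath.refl _, BPath.step hocc hp, by simp,
          fun c hc => hc⟩
      · rcases List.mem_cons.mp hc with rfl | hc
        · obtain ⟨L₁, L₂, hL₁, hL₂, hs₁, hs₂⟩ := ih (Or.inl hc2.symm)
          exact ⟨(p, q) :: L₁, L₂, BPath.step hocc hL₁, hL₂,
            fun c hc => by
              rcases List.mem_cons.mp hc with rfl | hc
              · exact List.mem_cons_self
              · exact List.mem_cons_of_mem _ (hs₁ c hc),
            fun c hc => List.mem_cons_of_mem _ (hs₂ c hc)⟩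
        · obtain ⟨L₁, L₂, hL₁, hL₂, hs₁, hs₂⟩ := ih (Or.inr ⟨c, hc, hc2⟩)
          exact ⟨(p, q) :: L₁, L₂, BPath.step hocc hL₁, hL₂,
            fun c hc => by
              rcases List.mem_cons.mp hc with rfl | hc
              · exact List.mem_cons_self
              · exact List.mem_cons_of_mem _ (hs₁ c hc),
            fun c hc => List.mem_cons_of_mem _ (hs₂ c hc)⟩

/-- Last visit to a set `S`: the tail of the path after it avoids `S`. -/
lemma bpath_last_visit {ω : Config d} {a b : Vert d} {L : List (Bond d)}
    (S : Set (Vert d)) (h : BPath ω a b L) (ha : a ∈ S) :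
    ∃ u ∈ S, ∃ L₂, BPath ω u b L₂ ∧ ∀ c ∈ L₂, c.2 ∉ S := by
  have key : ∀ {a b : Vert d} {L : List (Bond d)}, BPath ω a b L →
      (∀ c ∈ L, c.2 ∉ S) ∨
      ∃ u ∈ S, ∃ L₂, BPath ω u b L₂ ∧ ∀ c ∈ L₂, c.2 ∉ S := by
    intro a b L h
    induction h with
    | refl v => exact Or.inl (by simp)
    | @step p q w L hocc hp ih =>
        rcases ih with hall | ⟨u, hu, L₂, hL₂, htail⟩
        · by_cases hq : q ∈ S
          · exact Or.inr ⟨q, hq, L, hp, hall⟩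
          · refine Or.inl fun c hc => ?_
            rcases List.mem_cons.mp hc with rfl | hc
            · exact hq
            · exact hall c hc
        · exact Or.inr ⟨u, hu, L₂, hL₂, htail⟩
  rcases key h with hall | hres
  · exact ⟨a, ha, L, h, hall⟩
  · exact hres

/-- From an `OccursOn` connection event, extract a path with bonds inside `B`. -/
lemma extract_path {ω : Config d} {a b : Vert d} {B : Set (Bond d)}
    (h : OccursOn (connEvent a b) B ω) :
    ∃ L, BPath ω a b L ∧ ∀ c ∈ L, c ∈ B := by
  classical
  set ω' : Config d := fun c => if c ∈ B then ω c else false with hω'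
  have hconn : Conn ω' a b := h ω' (fun c hc => by simp [hω', hc])
  obtain ⟨L, hL⟩ := bpath_of_conn hconn
  have hmem : ∀ c ∈ L, c ∈ B := by
    intro c hc
    have := bpath_occ hL c hc
    by_contra hcB
    simp [Occ, hω', hcB] at this
  refine ⟨L, bpath_congr hL ?_, hmem⟩
  intro c hc
  simp [hω', hmem c hc]

/-- A path gives `OccursOn` for the corresponding connection event. -/
lemma occursOn_of_bpath {ω : Config d} {a b : Vert d} {L : List (Bond d)}
    {B : Set (Bond d)} (h : BPath ω a b L) (hsub : ∀ c ∈ L, c ∈ B) :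
    OccursOn (connEvent a b) B ω := by
  intro ω' hagree
  exact conn_of_bpath (bpath_congr h fun c hc => hagree c (hsub c hc))

/-- The key combinatorial step, stated asymmetrically in the two disjoint paths. -/
lemma aux_case {ω : Config d} {o v x u : Vert d} {LA LB L₂ : List (Bond d)}
    (hA : BPath ω o v LA) (hB : BPath ω o v LB)
    (hdisjAB : ∀ c ∈ LA, c ∉ LB)
    (hu : u = o ∨ ∃ c ∈ LA, c.2 = u)
    (h2 : BPath ω u x L₂)
    (h2A : ∀ c ∈ L₂, c ∉ LA) (h2B : ∀ c ∈ L₂, c ∉ LB) :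
    ω ∈ DisjOcc3 (connEvent o u ∩ connEvent u v) (connEvent o v) (connEvent u x) := by
  obtain ⟨A₁, A₂, hA₁, hA₂, hs₁, hs₂⟩ := bpath_split hA hu
  refine ⟨{c | c ∈ LA}, {c | c ∈ LB}, {c | c ∈ L₂}, ?_, ?_, ?_, ?_, ?_, ?_⟩
  · exact Set.disjoint_left.mpr fun c hc hc' => hdisjAB c hc hc'
  · exact Set.disjoint_left.mpr fun c hc hc' => h2A c hc' hc
  · exact Set.disjoint_left.mpr fun c hc hc' => h2B c hc' hc
  · intro ω' hagree
    exact ⟨conn_of_bpath (bpath_congr hA₁ fun c hc => hagree c (hs₁ c hc)),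
      conn_of_bpath (bpath_congr hA₂ fun c hc => hagree c (hs₂ c hc))⟩
  · exact occursOn_of_bpath hB fun c hc => hc
  · exact occursOn_of_bpath h2 fun c hc => hc

end Aux

/-- Inclusion (dbellsup):
`{o ⇒ v} ∩ {o → x} ⊆ ⋃_u {o → u → v} ∘ {o → v} ∘ {u → x}`. -/
theorem stmt5 {d : ℕ} (o v x : Vert d) :
    DoubleConn o v ∩ connEvent o x ⊆
      ⋃ u : Vert d,
        DisjOcc3 (connEvent o u ∩ connEvent u v) (connEvent o v) (connEvent u x) := by
  rintro ω ⟨⟨B₁, B₂, hdisj, h1, h2⟩, hconn⟩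
  obtain ⟨LA, hLA, hLAB⟩ := extract_path h1
  obtain ⟨LB, hLB, hLBB⟩ := extract_path h2
  obtain ⟨Lγ, hLγ⟩ := bpath_of_conn hconn
  -- the set of vertices visited by either of the two disjoint paths
  set S : Set (Vert d) :=
    {w | (w = o ∨ ∃ c ∈ LA, c.2 = w) ∨ (w = o ∨ ∃ c ∈ LB, c.2 = w)} with hS
  have hoS : o ∈ S := Or.inl (Or.inl rfl)
  obtain ⟨u, huS, L₂, hL₂, htail⟩ := bpath_last_visit S hLγ hoS
  refine Set.mem_iUnion.mpr ⟨u, ?_⟩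
  have hdisjAB : ∀ c ∈ LA, c ∉ LB := fun c hc hc' =>
    Set.disjoint_left.mp hdisj (hLAB c hc) (hLBB c hc')
  have h2A : ∀ c ∈ L₂, c ∉ LA := fun c hc hc' =>
    htail c hc (Or.inl (Or.inr ⟨c, hc', rfl⟩))
  have h2B : ∀ c ∈ L₂, c ∉ LB := fun c hc hc' =>
    htail c hc (Or.inr (Or.inr ⟨c, hc', rfl⟩))
  rcases huS with huA | huB
  · exact aux_case hLA hLB hdisjAB huA hL₂ h2A h2B
  · exact aux_case hLB hLA (fun c hc hc' => hdisjAB c hc' hc) huB hL₂ h2B h2A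
end

section
/- Let φ, q : ℤ^{d+1} → ℝ≥0 with φ(o) = 1 (where o is the origin) and suppose φ(v) ≤ (q*φ)(v) for all v ≠ o, and φ is supported on nonnegative times. Define T = sup_x Σ_v (q*φ*φ)(v)·(q*φ)(x; v) where the kernels are translation-invariant, i.e., (q*φ)(x;v) = (q*φ)(v-x). Then Σ_{u,v} φ(u) φ(v-u) φ(v) ≤ 1 + 2T. -/
open scoped ENNReal

/-- The bound (T0bd) with `m = 1`: for a two-point function `φ` with `φ(o) = 1`,
supported on nonnegative times (and at time zero only at the origin), a one-step kernel
`q`, and `φ(v) ≤ (q*φ)(v)` for `v ≠ o`, one has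
`Σ_{u,v} φ(u) φ(v-u) φ(v) ≤ 1 + 2T` where
`T = sup_x Σ_v (q*φ*φ)(v) · (q*φ)(v - x)` is the open triangle. -/
theorem stmt11 (d : ℕ) (φ q : ((Fin d → ℤ) × ℤ) → ℝ≥0∞)
    (hφo : φ 0 = 1)
    (hφsupp : ∀ v : (Fin d → ℤ) × ℤ, v.2 < 0 → φ v = 0)
    (hφ0 : ∀ v : (Fin d → ℤ) × ℤ, v.2 = 0 → v ≠ 0 → φ v = 0)
    (hq : ∀ v : (Fin d → ℤ) × ℤ, v.2 ≠ 1 → q v = 0)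
    (hsub : ∀ v : (Fin d → ℤ) × ℤ, v ≠ 0 → φ v ≤ ∑' w, q w * φ (v - w)) :
    ∑' u : (Fin d → ℤ) × ℤ, ∑' v : (Fin d → ℤ) × ℤ, φ u * φ (v - u) * φ v ≤
      1 + 2 * ⨆ x : (Fin d → ℤ) × ℤ, ∑' v : (Fin d → ℤ) × ℤ,
        (∑' w, (∑' z, q z * φ (w - z)) * φ (v - w)) * (∑' w, q w * φ (v - x - w)) := by
  set Qφ : ((Fin d → ℤ) × ℤ) → ℝ≥0∞ := fun v => ∑' w, q w * φ (v - w) with hQφdef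
  have hA0 : (∑' u : (Fin d → ℤ) × ℤ, φ u * φ ((0 : (Fin d → ℤ) × ℤ) - u)) = 1 := by
    rw [tsum_eq_single 0]
    · simp [hφo]
    · intro u hu
      rcases lt_trichotomy u.2 0 with h | h | h
      · simp [hφsupp u h]
      · simp [hφ0 u h hu]
      · have hneg : ((0 : (Fin d → ℤ) × ℤ) - u).2 < 0 := by
          simp only [Prod.snd_sub, Prod.snd_zero]; omega
        rw [hφsupp _ hneg, mul_zero]
  have hmono : ∀ v : (Fin d → ℤ) × ℤ, Qφ v ≤ ∑' w, Qφ w * φ (v - w) := by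
    intro v
    have h := ENNReal.le_tsum (f := fun w => Qφ w * φ (v - w)) v
    simpa [hφo] using h
  have hAv : ∀ v : (Fin d → ℤ) × ℤ, v ≠ 0 →
      (∑' u, φ u * φ (v - u)) ≤ 2 * ∑' w, Qφ w * φ (v - w) := by
    intro v hv
    rw [ENNReal.tsum_eq_add_tsum_ite 0]
    refine (add_le_add ?_ ?_).trans_eq (two_mul _).symm
    · simp only [hφo, one_mul, sub_zero]
      exact (hsub v hv).trans (hmono v)
    · apply ENNReal.tsum_le_tsum
      intro u
      by_cases hu : u = 0
      · rw [if_pos hu]; exact zero_le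
      · rw [if_neg hu]
        exact mul_le_mul_left (hsub u hu) _
  have hswap : (∑' u : (Fin d → ℤ) × ℤ, ∑' v : (Fin d → ℤ) × ℤ, φ u * φ (v - u) * φ v)
      = ∑' v : (Fin d → ℤ) × ℤ, (∑' u, φ u * φ (v - u)) * φ v := by
    rw [ENNReal.tsum_comm]
    congr 1
    funext v
    rw [ENNReal.tsum_mul_right]
  rw [hswap]
  rw [ENNReal.tsum_eq_add_tsum_ite 0]
  apply add_le_add
  · rw [hA0, hφo, one_mul]
  · refine le_trans (ENNReal.tsum_le_tsum
        (g := fun v : (Fin d → ℤ) × ℤ => 2 * ((∑' w, Qφ w * φ (v - w)) * Qφ v)) ?_) ?_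
    · intro v
      by_cases hv : v = 0
      · rw [if_pos hv]; exact zero_le
      · rw [if_neg hv]
        calc (∑' u, φ u * φ (v - u)) * φ v
            ≤ (2 * ∑' w, Qφ w * φ (v - w)) * Qφ v :=
              mul_le_mul' (hAv v hv) (hsub v hv)
          _ = 2 * ((∑' w, Qφ w * φ (v - w)) * Qφ v) := by ring
    · rw [ENNReal.tsum_mul_left]
      apply mul_le_mul_right
      have h := le_iSup (fun x : (Fin d → ℤ) × ℤ =>
        ∑' v : (Fin d → ℤ) × ℤ, (∑' w, Qφ w * φ (v - w)) * Qφ (v - x)) 0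
      simpa using h
end

section
/- In oriented percolation, for bonds b', b with b temporally after b', and vertices y, x: the event E(b', x; C̃^{b'}(y)) ∩ {b ∈ piv(b̄', x)} is contained in the disjoint-occurrence event {y → x} ∘ {b' → b → x}, where {b' → b → x} denotes the event that b' and b are occupied and there are occupied paths b̄' → b̲ and b̄ → x. -/
open MeasureTheory
open scoped ENNReal

variable {d : ℕ}

/-- The event `{b' → b → x}`: `b'` and `b` are occupied with occupied paths
`b̄' → b̲` and `b̄ → x`. -/
def bondBondConnEvent (b' b : Bond d) (x : Vert d) : Set (Config d) :=
  {ω | Occ ω b' ∧ Conn ω b'.2 b.1 ∧ Occ ω b ∧ Conn ω b.2 x}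


section AuxLemmas

/-- Turn a bond off. -/
def off (ω : Config d) (e : Bond d) : Config d := flipBond ω e false

lemma off_eq_true {ω : Config d} {e f : Bond d} :
    off ω e f = true ↔ ω f = true ∧ f ≠ e := by
  unfold off flipBond
  by_cases h : f = e <;> simp [h]

lemma off_of_ne {ω : Config d} {e f : Bond d} (h : f ≠ e) (ho : ω f = true) :
    off ω e f = true := off_eq_true.2 ⟨ho, h⟩

lemma off_self {ω : Config d} {e : Bond d} (h : ω e = false) : off ω e = ω := by
  funext f
  unfold off flipBond
  by_cases hf : f = e <;> simp [hf, h.symm]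

lemma Conn.mono {F G : Config d} (h : ∀ e, F e = true → G e = true) :
    ∀ {u v}, Conn F u v → Conn G u v := by
  intro u v hc
  induction hc with
  | refl v => exact Conn.refl v
  | step ho _ ih => exact Conn.step (h _ ho) ih

lemma Conn.trans {F : Config d} {u v w : Vert d}
    (h1 : Conn F u v) (h2 : Conn F v w) : Conn F u w := by
  induction h1 with
  | refl => exact h2
  | step ho _ ih => exact Conn.step ho (ih h2)

lemma Conn.snoc {F : Config d} {u v w : Vert d}
    (h1 : Conn F u v) (h2 : F (v, w) = true) : Conn F u w :=
  h1.trans (Conn.step h2 (Conn.refl w))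

lemma off_le {ω : Config d} (e : Bond d) : ∀ f, off ω e f = true → ω f = true :=
  fun _ h => (off_eq_true.1 h).1

lemma off_comm {ω : Config d} (e g : Bond d) : off (off ω e) g = off (off ω g) e := by
  funext f
  unfold off flipBond
  by_cases h1 : f = e <;> by_cases h2 : f = g <;> simp [h1, h2]

/-- Splitting a connection at a bond `e`: either we can avoid `e`, or we connect to `e.1`
and from `e.2` avoiding `e`. -/
lemma conn_split {F : Config d} {e : Bond d} {x : Vert d} :
    ∀ {u}, Conn F u x →
      Conn (off F e) u x ∨ (Conn (off F e) u e.1 ∧ Conn (off F e) e.2 x) := by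
  intro u hc
  induction hc with
  | refl v => exact Or.inl (Conn.refl v)
  | @step u v w ho hc ih =>
    by_cases he : (u, v) = e
    · rcases ih with h | ⟨_, h2⟩
      · exact Or.inr ⟨he ▸ Conn.refl u, by
          have : v = e.2 := by rw [← he]
          exact this ▸ h⟩
      · refine Or.inr ⟨?_, h2⟩
        have : u = e.1 := by rw [← he]
        exact this ▸ Conn.refl u
    · rcases ih with h | ⟨h1, h2⟩
      · exact Or.inl (Conn.step (off_of_ne he ho) h)
      · exact Or.inr ⟨Conn.step (off_of_ne he ho) h1, h2⟩

lemma connAvoid_iff {ω : Config d} {e : Bond d} {u v : Vert d} :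
    ConnAvoid ω e u v ↔ Conn (off ω e) u v := by
  constructor
  · intro h
    induction h with
    | refl v => exact Conn.refl v
    | step hne ho _ ih => exact Conn.step (off_of_ne hne ho) ih
  · intro h
    induction h with
    | refl v => exact ConnAvoid.refl v
    | @step a bb c ho _ ih =>
      have := off_eq_true.1 ho
      exact ConnAvoid.step this.2 this.1 ih

/-- Walks with explicit edge lists. -/
inductive IsWalk (F : Config d) : Vert d → List (Bond d) → Vert d → Prop
  | nil (v) : IsWalk F v [] v
  | cons {v z : Vert d} {e : Bond d} {l : List (Bond d)} (h1 : e.1 = v)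
      (h2 : F e = true) (h3 : IsWalk F e.2 l z) : IsWalk F v (e :: l) z

lemma IsWalk.mem_occ {F : Config d} {s t : Vert d} {L : List (Bond d)}
    (h : IsWalk F s L t) : ∀ e ∈ L, F e = true := by
  induction h with
  | nil => simp
  | cons h1 h2 _ ih =>
    intro f hf
    rcases List.mem_cons.1 hf with rfl | hf
    · exact h2
    · exact ih f hf

lemma IsWalk.conn {F : Config d} {s t : Vert d} {L : List (Bond d)}
    (h : IsWalk F s L t) : Conn F s t := by
  induction h with
  | nil v => exact Conn.refl v
  | cons h1 h2 _ ih => exact h1 ▸ Conn.step (by rwa [Prod.mk.eta]) ih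

lemma Conn.walk {F : Config d} {s t : Vert d} (h : Conn F s t) :
    ∃ L, IsWalk F s L t := by
  induction h with
  | refl v => exact ⟨[], IsWalk.nil v⟩
  | @step u v w ho _ ih =>
    obtain ⟨L, hL⟩ := ih
    exact ⟨(u, v) :: L, IsWalk.cons rfl ho hL⟩

lemma IsWalk.transfer {F G : Config d} {s t : Vert d} {L : List (Bond d)}
    (h : IsWalk F s L t) (hG : ∀ e ∈ L, G e = true) : IsWalk G s L t := by
  induction h with
  | nil v => exact IsWalk.nil v
  | cons h1 h2 h3 ih =>
    exact IsWalk.cons h1 (hG _ (List.mem_cons_self)) (ih fun e he => hG e (List.mem_cons_of_mem _ he))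

lemma IsWalk.append_split {F : Config d} {s t : Vert d} {L₁ L₂ : List (Bond d)}
    (h : IsWalk F s (L₁ ++ L₂) t) : ∃ m, IsWalk F s L₁ m ∧ IsWalk F m L₂ t := by
  induction L₁ generalizing s with
  | nil => exact ⟨s, IsWalk.nil s, h⟩
  | cons e l ih =>
    cases h with
    | cons h1 h2 h3 =>
      obtain ⟨m, hm1, hm2⟩ := ih h3
      exact ⟨m, IsWalk.cons h1 h2 hm1, hm2⟩

lemma walk_dedup {F : Config d} {t : Vert d} :
    ∀ n (L : List (Bond d)) (s : Vert d), L.length ≤ n → IsWalk F s L t →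
      ∃ M, IsWalk F s M t ∧ M.Nodup ∧ ∀ e ∈ M, e ∈ L := by
  intro n
  induction n with
  | zero =>
    intro L s hL h
    have : L = [] := List.length_eq_zero_iff.1 (Nat.le_zero.1 hL)
    subst this
    exact ⟨[], h, List.nodup_nil, by simp⟩
  | succ n ih =>
    intro L s hL h
    match L, h with
    | [], h => exact ⟨[], h, List.nodup_nil, by simp⟩
    | e :: l, IsWalk.cons h1 h2 h3 =>
      by_cases hel : e ∈ l
      · obtain ⟨l₁, l₂, rfl⟩ := List.append_of_mem hel
        obtain ⟨m, _, hw2⟩ := h3.append_split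
        cases hw2 with
        | cons g1 g2 g3 =>
          have hlen : (e :: l₂).length ≤ n := by
            simp only [List.length_cons, List.length_append] at hL ⊢
            omega
          obtain ⟨M, hM1, hM2, hM3⟩ := ih (e :: l₂) s hlen (IsWalk.cons h1 h2 g3)
          exact ⟨M, hM1, hM2, fun f hf => by
            rcases List.mem_cons.1 (hM3 f hf) with rfl | hf2
            · exact List.mem_cons_self
            · exact List.mem_cons_of_mem _ (List.mem_append_right _ (List.mem_cons_of_mem _ hf2))⟩
      · have hlen : l.length ≤ n := by
          simp only [List.length_cons] at hL
          omega
        obtain ⟨M, hM1, hM2, hM3⟩ := ih l e.2 hlen h3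
        have heM : e ∉ M := fun hc => hel (hM3 e hc)
        exact ⟨e :: M, IsWalk.cons h1 h2 hM1, List.nodup_cons.2 ⟨heM, hM2⟩,
          fun f hf => by
            rcases List.mem_cons.1 hf with rfl | hf
            · exact List.mem_cons_self
            · exact List.mem_cons_of_mem _ (hM3 f hf)⟩

lemma Conn.walk_nodup {F : Config d} {s t : Vert d} (h : Conn F s t) :
    ∃ L, IsWalk F s L t ∧ L.Nodup := by
  obtain ⟨L, hL⟩ := h.walk
  obtain ⟨M, hM1, hM2, _⟩ := walk_dedup L.length L s le_rfl hL
  exact ⟨M, hM1, hM2⟩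
/-- Number of edges in `L` with bottom `v`. -/
def cnt1 (v : Vert d) (L : List (Bond d)) : ℕ := L.countP (fun e => decide (e.1 = v))
/-- Number of edges in `L` with top `v`. -/
def cnt2 (v : Vert d) (L : List (Bond d)) : ℕ := L.countP (fun e => decide (e.2 = v))

lemma cnt1_cons (v : Vert d) (e : Bond d) (L : List (Bond d)) :
    cnt1 v (e :: L) = cnt1 v L + (if v = e.1 then 1 else 0) := by
  simp [cnt1, List.countP_cons, eq_comm]

lemma cnt2_cons (v : Vert d) (e : Bond d) (L : List (Bond d)) :
    cnt2 v (e :: L) = cnt2 v L + (if v = e.2 then 1 else 0) := by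
  simp [cnt2, List.countP_cons, eq_comm]

lemma cnt1_append (v : Vert d) (L₁ L₂ : List (Bond d)) :
    cnt1 v (L₁ ++ L₂) = cnt1 v L₁ + cnt1 v L₂ := List.countP_append

lemma cnt2_append (v : Vert d) (L₁ L₂ : List (Bond d)) :
    cnt2 v (L₁ ++ L₂) = cnt2 v L₁ + cnt2 v L₂ := List.countP_append

/-- Walk counting identity. -/
lemma IsWalk.count {F : Config d} {s t : Vert d} {L : List (Bond d)}
    (h : IsWalk F s L t) (v : Vert d) :
    cnt1 v L + (if v = t then 1 else 0) = cnt2 v L + (if v = s then 1 else 0) := by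
  induction h with
  | nil w => simp [cnt1, cnt2]
  | @cons a z e l h1 h2 h3 ih =>
    subst h1
    rw [cnt1_cons, cnt2_cons]
    omega
lemma cnt1_erase {v : Vert d} {e : Bond d} : ∀ {L : List (Bond d)}, e ∈ L →
    cnt1 v (L.erase e) + (if v = e.1 then 1 else 0) = cnt1 v L := by
  intro L hL
  induction L with
  | nil => simp at hL
  | cons a l ih =>
    by_cases ha : a = e
    · subst ha
      rw [List.erase_cons_head, cnt1_cons]
    · rw [List.erase_cons_tail (by simpa using ha), cnt1_cons, cnt1_cons,
        ← ih (List.mem_of_ne_of_mem (fun h => ha h.symm) hL)]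
      omega

lemma cnt2_erase {v : Vert d} {e : Bond d} : ∀ {L : List (Bond d)}, e ∈ L →
    cnt2 v (L.erase e) + (if v = e.2 then 1 else 0) = cnt2 v L := by
  intro L hL
  induction L with
  | nil => simp at hL
  | cons a l ih =>
    by_cases ha : a = e
    · subst ha
      rw [List.erase_cons_head, cnt2_cons]
    · rw [List.erase_cons_tail (by simpa using ha), cnt2_cons, cnt2_cons,
        ← ih (List.mem_of_ne_of_mem (fun h => ha h.symm) hL)]
      omega

lemma cnt1_pos {v : Vert d} {L : List (Bond d)} (h : 1 ≤ cnt1 v L) :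
    ∃ e ∈ L, e.1 = v := by
  induction L with
  | nil => simp [cnt1] at h
  | cons a l ih =>
    rw [cnt1_cons] at h
    by_cases ha : v = a.1
    · exact ⟨a, List.mem_cons_self, ha.symm⟩
    · rw [if_neg ha, Nat.add_zero] at h
      obtain ⟨e, he, hv⟩ := ih h
      exact ⟨e, List.mem_cons_of_mem _ he, hv⟩

/-- A set-like config from a proposition on bonds. -/
noncomputable def pcfg (P : Set (Bond d)) : Config d :=
  fun e => @decide (e ∈ P) (Classical.propDecidable _)

lemma pcfg_iff {P : Set (Bond d)} {e : Bond d} : pcfg P e = true ↔ e ∈ P := by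
  simp [pcfg]

/-- Trail extraction with charges. -/
lemma trailg {x : Vert d} :
    ∀ (n : ℕ) (F : List (Bond d)), F.length ≤ n → F.Nodup →
      ∀ (c : Vert d → ℕ) (s : Vert d),
      (∀ v, v ≠ x → cnt2 v F + c v ≤ cnt1 v F) → 1 ≤ c s →
      ∃ (W F₂ : List (Bond d)), IsWalk (pcfg {e | e ∈ F}) s W x ∧ W.Nodup ∧ F₂.Nodup ∧
        (∀ e, e ∈ F₂ ↔ e ∈ F ∧ e ∉ W) ∧
        (∀ v, v ≠ x → cnt2 v F₂ + (c v - if v = s then 1 else 0) ≤ cnt1 v F₂) := by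
  intro n
  induction n with
  | zero =>
    intro F hF hnd c s hch hcs
    have : F = [] := List.length_eq_zero_iff.1 (Nat.le_zero.1 hF)
    subst this
    by_cases hsx : s = x
    · subst hsx
      exact ⟨[], [], IsWalk.nil s, List.nodup_nil, List.nodup_nil, by simp,
        fun v hv => by have := hch v hv; simp_all [cnt1, cnt2]⟩
    · have := hch s hsx
      simp [cnt1, cnt2] at this
      omega
  | succ n ih =>
    intro F hF hnd c s hch hcs
    by_cases hsx : s = x
    · subst hsx
      refine ⟨[], F, IsWalk.nil _, List.nodup_nil, hnd, by simp, fun v hv => ?_⟩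
      have := hch v hv
      rw [if_neg hv]
      omega
    · -- pick an edge out of s
      have hout : 1 ≤ cnt1 s F := le_trans (le_trans hcs (Nat.le_add_left _ _)) (hch s hsx)
      obtain ⟨e, heF, he1⟩ := cnt1_pos hout
      have hF' : (F.erase e).length ≤ n := by
        rw [List.length_erase_of_mem heF]
        omega
      have hnd' : (F.erase e).Nodup := hnd.erase e
      have hch' : ∀ v, v ≠ x → cnt2 v (F.erase e) +
          ((if v = e.2 then 1 else 0) + (c v - if v = s then 1 else 0)) ≤ cnt1 v (F.erase e) := by
        intro v hv
        have h1 := cnt1_erase (v := v) heF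
        have h2 := cnt2_erase (v := v) heF
        have h3 := hch v hv
        have hb2 : (if v = e.2 then (1:ℕ) else 0) ≤ 1 := by split <;> omega
        by_cases hA : v = s
        · have e1 : (if v = s then (1:ℕ) else 0) = 1 := if_pos hA
          have e2 : (if v = e.1 then (1:ℕ) else 0) = 1 := by rw [he1]; exact if_pos hA
          have hc1 : 1 ≤ c v := hA ▸ hcs
          omega
        · have e1 : (if v = s then (1:ℕ) else 0) = 0 := if_neg hA
          have e2 : (if v = e.1 then (1:ℕ) else 0) = 0 := by rw [he1]; exact if_neg hA
          omega
      have hcs' : 1 ≤ (if e.2 = e.2 then 1 else 0) + (c e.2 - if e.2 = s then 1 else 0) := by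
        simp
      obtain ⟨W, F₂, hW, hWnd, hF₂nd, hF₂, hch₂⟩ := ih (F.erase e) hF' hnd'
        (fun v => (if v = e.2 then 1 else 0) + (c v - if v = s then 1 else 0)) e.2 hch' hcs'
      have heW : e ∉ W := by
        intro hc
        have := hW.mem_occ e hc
        rw [pcfg_iff] at this
        exact ((hnd.mem_erase_iff.1 this).1) rfl
      refine ⟨e :: W, F₂, ?_, List.nodup_cons.2 ⟨heW, hWnd⟩, hF₂nd, ?_, ?_⟩
      · refine IsWalk.cons he1 (pcfg_iff.2 heF) (hW.transfer ?_)
        intro f hf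
        have := hW.mem_occ f hf
        rw [pcfg_iff] at this ⊢
        exact (hnd.mem_erase_iff.1 this).2
      · intro f
        rw [hF₂ f, hnd.mem_erase_iff, List.mem_cons]
        constructor
        · rintro ⟨⟨hne, hfF⟩, hfW⟩
          exact ⟨hfF, fun h => h.elim hne hfW⟩
        · rintro ⟨hfF, hfW⟩
          exact ⟨⟨fun h => hfW (Or.inl h), hfF⟩, fun h => hfW (Or.inr h)⟩
      · intro v hv
        have h5 : cnt2 v F₂ + (((if v = e.2 then (1:ℕ) else 0) +
            (c v - if v = s then 1 else 0)) - if v = e.2 then 1 else 0) ≤ cnt1 v F₂ :=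
          hch₂ v hv
        omega
lemma IsWalk.append {F : Config d} {a m c : Vert d} {L₁ L₂ : List (Bond d)}
    (h1 : IsWalk F a L₁ m) (h2 : IsWalk F m L₂ c) : IsWalk F a (L₁ ++ L₂) c := by
  induction h1 with
  | nil => exact h2
  | cons g1 g2 _ ih => exact IsWalk.cons g1 g2 (ih h2)

lemma IsWalk.cons_head {F : Config d} {a c : Vert d} {e : Bond d} {l : List (Bond d)}
    (h : IsWalk F a (e :: l) c) : e.1 = a ∧ F e = true ∧ IsWalk F e.2 l c := by
  cases h with
  | cons h1 h2 h3 => exact ⟨h1, h2, h3⟩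

lemma cnt1_part (v : Vert d) (q : Bond d → Bool) (L : List (Bond d)) :
    cnt1 v (L.filter q) + cnt1 v (L.filter (fun e => !q e)) = cnt1 v L := by
  induction L with
  | nil => simp [cnt1]
  | cons a l ih =>
    by_cases hq : q a
    · rw [List.filter_cons_of_pos hq, List.filter_cons_of_neg (by simp [hq]),
        cnt1_cons, cnt1_cons]
      omega
    · rw [List.filter_cons_of_neg (by simp_all), List.filter_cons_of_pos (by simp_all),
        cnt1_cons, cnt1_cons]
      omega

lemma cnt2_part (v : Vert d) (q : Bond d → Bool) (L : List (Bond d)) :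
    cnt2 v (L.filter q) + cnt2 v (L.filter (fun e => !q e)) = cnt2 v L := by
  induction L with
  | nil => simp [cnt2]
  | cons a l ih =>
    by_cases hq : q a
    · rw [List.filter_cons_of_pos hq, List.filter_cons_of_neg (by simp [hq]),
        cnt2_cons, cnt2_cons]
      omega
    · rw [List.filter_cons_of_neg (by simp_all), List.filter_cons_of_pos (by simp_all),
        cnt2_cons, cnt2_cons]
      omega

lemma cnt1_swap (v : Vert d) (L : List (Bond d)) :
    cnt1 v (L.map Prod.swap) = cnt2 v L := by
  induction L with
  | nil => rfl
  | cons a l ih =>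
    rw [List.map_cons, cnt1_cons, cnt2_cons, ih]
    simp [Prod.swap]

lemma cnt2_swap (v : Vert d) (L : List (Bond d)) :
    cnt2 v (L.map Prod.swap) = cnt1 v L := by
  induction L with
  | nil => rfl
  | cons a l ih =>
    rw [List.map_cons, cnt2_cons, cnt1_cons, ih]
    simp [Prod.swap]

lemma cnt1_sub {R L : List (Bond d)} (hR : R.Nodup) (hL : L.Nodup)
    (hsub : ∀ e ∈ R, e ∈ L) (v : Vert d) :
    cnt1 v (L.filter (fun e => decide (e ∈ R))) = cnt1 v R := by
  have hperm : List.Perm (L.filter (fun e => decide (e ∈ R))) R := by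
    apply List.perm_of_nodup_nodup_toFinset_eq (hL.filter _) hR
    ext e
    simp only [List.mem_toFinset, List.mem_filter, decide_eq_true_eq]
    exact ⟨fun h => h.2, fun h => ⟨hsub e h, h⟩⟩
  exact hperm.countP_eq _

lemma cnt2_sub {R L : List (Bond d)} (hR : R.Nodup) (hL : L.Nodup)
    (hsub : ∀ e ∈ R, e ∈ L) (v : Vert d) :
    cnt2 v (L.filter (fun e => decide (e ∈ R))) = cnt2 v R := by
  have hperm : List.Perm (L.filter (fun e => decide (e ∈ R))) R := by
    apply List.perm_of_nodup_nodup_toFinset_eq (hL.filter _) hR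
    ext e
    simp only [List.mem_toFinset, List.mem_filter, decide_eq_true_eq]
    exact ⟨fun h => h.2, fun h => ⟨hsub e h, h⟩⟩
  exact hperm.countP_eq _

lemma conn_cross {G : Config d} {P : Vert d → Prop} :
    ∀ {v w}, Conn G v w → P v → ¬ P w → ∃ e, G e = true ∧ P e.1 ∧ ¬ P e.2 := by
  intro v w h
  induction h with
  | refl => exact fun h1 h2 => absurd h1 h2
  | @step u v w ho _ ih =>
    intro hu hw
    by_cases hv : P v
    · exact ih hv hw
    · exact ⟨(u, v), ho, hu, hv⟩

lemma walk_down {G : Config d} {P : Vert d → Prop} :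
    ∀ {L : List (Bond d)} {a m : Vert d}, IsWalk G a L m →
      (∀ e ∈ L, P e.2 → P e.1) → P m → P a := by
  intro L a m h
  induction h with
  | nil => exact fun _ h => h
  | @cons v z e l h1 h2 h3 ih =>
    intro hrev hm
    exact h1 ▸ hrev e (List.mem_cons_self)
      (ih (fun f hf => hrev f (List.mem_cons_of_mem _ hf)) hm)

lemma walk_out {G : Config d} {P : Vert d → Prop} :
    ∀ {L : List (Bond d)} {a m : Vert d}, IsWalk G a L m →
      (∀ e ∈ L, P e.2 → P e.1) → ¬ P a → ∀ e ∈ L, ¬ P e.1 := by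
  intro L a m h
  induction h with
  | nil => simp
  | @cons v z e l h1 h2 h3 ih =>
    intro hrev ha f hf
    have he2 : ¬ P e.2 := fun hp => ha (h1 ▸ hrev e (List.mem_cons_self) hp)
    rcases List.mem_cons.1 hf with rfl | hf
    · exact h1 ▸ ha
    · exact ih (fun f' hf' => hrev f' (List.mem_cons_of_mem _ hf')) he2 f hf

/-- Two edge-disjoint walks from `y` and `s` to `x`, given no single-bond cut. -/
lemma menger2 {H : Config d} {y s x : Vert d}
    (hy : Conn H y x) (hs : Conn H s x)
    (hcut : ∀ g, Conn (off H g) y x ∨ Conn (off H g) s x) :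
    ∃ L₁ L₂ : List (Bond d), IsWalk H y L₁ x ∧ IsWalk H s L₂ x ∧ ∀ e ∈ L₁, e ∉ L₂ := by
  obtain ⟨p, hp, hpnd⟩ := hs.walk_nodup
  set Hres : Config d := pcfg {e | (H e = true ∧ e ∉ p) ∨ Prod.swap e ∈ p} with hHres
  by_cases hconn : Conn Hres y x
  · -- augmenting case
    obtain ⟨α, hα, hαnd⟩ := hconn.walk_nodup
    set aA := α.filter (fun e => pcfg {f | H f = true ∧ f ∉ p} e) with haA
    set aB := α.filter (fun e => !(pcfg {f | H f = true ∧ f ∉ p} e)) with haB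
    set Rl := aB.map Prod.swap with hRl
    have hA_H : ∀ e ∈ aA, H e = true ∧ e ∉ p := by
      intro e he
      have := (List.mem_filter.1 he).2
      exact pcfg_iff.1 this
    have hB_p : ∀ e ∈ aB, Prod.swap e ∈ p := by
      intro e he
      have h1 := (List.mem_filter.1 he).1
      have h2 := (List.mem_filter.1 he).2
      have h3 := hα.mem_occ e h1
      rw [hHres, pcfg_iff] at h3
      rcases h3 with h3 | h3
      · exfalso
        rw [Bool.not_eq_true', ← Bool.not_eq_true, pcfg_iff] at h2
        · exact h2 h3
      · exact h3
    have hRl_p : ∀ e ∈ Rl, e ∈ p := by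
      intro e he
      rw [hRl] at he
      obtain ⟨f, hf, rfl⟩ := List.mem_map.1 he
      exact hB_p f hf
    have haAnd : aA.Nodup := hαnd.filter _
    have haBnd : aB.Nodup := hαnd.filter _
    have hRlnd : Rl.Nodup := haBnd.map (fun a b h => Prod.swap_injective h)
    set F := p.filter (fun e => !(decide (e ∈ Rl))) ++ aA with hF
    have hFnd : F.Nodup := by
      rw [hF, List.nodup_append]
      refine ⟨hpnd.filter _, haAnd, fun e he₁ f he₂ hef => ?_⟩
      subst hef
      exact (hA_H e he₂).2 (List.mem_of_mem_filter he₁)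
    have hFH : ∀ e ∈ F, H e = true := by
      intro e he
      rcases List.mem_append.1 he with he | he
      · exact hp.mem_occ e (List.mem_of_mem_filter he)
      · exact (hA_H e he).1
    have hch : ∀ v, v ≠ x → cnt2 v F +
        ((if v = s then 1 else 0) + (if v = y then 1 else 0)) ≤ cnt1 v F := by
      intro v hv
      have h1 := hp.count v
      have h2 := hα.count v
      have hpart1 : cnt1 v aA + cnt1 v aB = cnt1 v α := by
        rw [haA, haB]; exact cnt1_part v _ α
      have hpart2 : cnt2 v aA + cnt2 v aB = cnt2 v α := by
        rw [haA, haB]; exact cnt2_part v _ α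
      have hsub1 : cnt1 v (p.filter (fun e => decide (e ∈ Rl))) = cnt1 v Rl :=
        cnt1_sub hRlnd hpnd hRl_p v
      have hsub2 : cnt2 v (p.filter (fun e => decide (e ∈ Rl))) = cnt2 v Rl :=
        cnt2_sub hRlnd hpnd hRl_p v
      have hpp1 : cnt1 v (p.filter (fun e => decide (e ∈ Rl))) +
          cnt1 v (p.filter (fun e => !(decide (e ∈ Rl)))) = cnt1 v p :=
        cnt1_part v _ p
      have hpp2 : cnt2 v (p.filter (fun e => decide (e ∈ Rl))) +
          cnt2 v (p.filter (fun e => !(decide (e ∈ Rl)))) = cnt2 v p :=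
        cnt2_part v _ p
      have hsw1 : cnt1 v Rl = cnt2 v aB := by rw [hRl]; exact cnt1_swap v aB
      have hsw2 : cnt2 v Rl = cnt1 v aB := by rw [hRl]; exact cnt2_swap v aB
      have hap1 : cnt1 v F = cnt1 v (p.filter (fun e => !(decide (e ∈ Rl)))) + cnt1 v aA := by
        rw [hF]; exact cnt1_append v _ _
      have hap2 : cnt2 v F = cnt2 v (p.filter (fun e => !(decide (e ∈ Rl)))) + cnt2 v aA := by
        rw [hF]; exact cnt2_append v _ _
      have hx0 : (if v = x then (1:ℕ) else 0) = 0 := if_neg hv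
      omega
    obtain ⟨W₂, F₂, hW₂, hW₂nd, hF₂nd, hF₂mem, hch₂⟩ :=
      trailg F.length F le_rfl hFnd
        (fun v => (if v = s then 1 else 0) + (if v = y then 1 else 0)) s hch (by simp)
    have hch₂' : ∀ v, v ≠ x → cnt2 v F₂ + (if v = y then 1 else 0) ≤ cnt1 v F₂ := by
      intro v hv
      have := hch₂ v hv
      omega
    obtain ⟨W₁, F₃, hW₁, hW₁nd, hF₃nd, hF₃mem, hch₃⟩ :=
      trailg F₂.length F₂ le_rfl hF₂nd (fun v => if v = y then 1 else 0) y hch₂' (by simp)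
    refine ⟨W₁, W₂, ?_, ?_, ?_⟩
    · refine hW₁.transfer fun e he => ?_
      have h1 := pcfg_iff.1 (hW₁.mem_occ e he)
      exact hFH e ((hF₂mem e).1 h1).1
    · exact hW₂.transfer fun e he => hFH e (pcfg_iff.1 (hW₂.mem_occ e he))
    · intro e he
      have h1 := pcfg_iff.1 (hW₁.mem_occ e he)
      exact ((hF₂mem e).1 h1).2
  · -- cut case
    set W : Vert d → Prop := fun v => Conn Hres y v with hW
    have hyW : W y := Conn.refl y
    have hxW : ¬ W x := hconn
    obtain ⟨g, hgH, hg1, hg2⟩ := conn_cross hy hyW hxW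
    have hmemp : ∀ e, H e = true → W e.1 → ¬ W e.2 → e ∈ p := by
      intro e heH he1 he2
      by_contra hein
      refine he2 (Conn.snoc he1 ?_)
      rw [hHres]
      rw [Prod.mk.eta]
      exact pcfg_iff.2 (Or.inl ⟨heH, hein⟩)
    have hrev : ∀ e ∈ p, W e.2 → W e.1 := by
      intro e hep he2
      refine Conn.snoc he2 ?_
      rw [hHres]
      exact pcfg_iff.2 (Or.inr (by simpa using hep))
    have hgp : g ∈ p := hmemp g hgH hg1 hg2
    obtain ⟨p₁, p₂, rfl⟩ := List.append_of_mem hgp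
    obtain ⟨m, hw1, hw2⟩ := hp.append_split
    obtain ⟨hm, _, hw3⟩ := hw2.cons_head
    have hsW : W s :=
      walk_down hw1 (fun e he => hrev e (List.mem_append_left _ he)) (hm ▸ hg1)
    have huniq : ∀ e, H e = true → W e.1 → ¬ W e.2 → e = g := by
      intro e heH he1 he2
      have hep := hmemp e heH he1 he2
      rcases List.mem_append.1 hep with hep | hep
      · -- e in the prefix p₁
        obtain ⟨q₁, q₂, rfl⟩ := List.append_of_mem hep
        obtain ⟨m₃, _, hw5⟩ := hw1.append_split
        obtain ⟨_, _, hw6⟩ := hw5.cons_head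
        have hwalk : IsWalk H e.2 (q₂ ++ g :: p₂) x := hw6.append (hm ▸ hw2)
        have hall : ∀ f ∈ q₂ ++ g :: p₂, W f.2 → W f.1 := by
          intro f hf
          refine hrev f ?_
          rcases List.mem_append.1 hf with hf | hf
          · exact List.mem_append_left _ (List.mem_append_right _ (List.mem_cons_of_mem _ hf))
          · exact List.mem_append_right _ hf
        have := walk_out hwalk hall he2 g (List.mem_append_right _ (List.mem_cons_self))
        exact absurd hg1 this
      · rcases List.mem_cons.1 hep with rfl | hep
        · rfl
        · -- e in the suffix p₂
          have hall : ∀ f ∈ p₂, W f.2 → W f.1 := fun f hf =>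
            hrev f (List.mem_append_right _ (List.mem_cons_of_mem _ hf))
          have := walk_out hw3 hall hg2 e hep
          exact absurd he1 this
    have hinv : ∀ {v w}, Conn (off H g) v w → W v → W w := by
      intro v w h
      induction h with
      | refl => exact id
      | @step u v w ho _ ih =>
        intro hu
        have h1 := off_eq_true.1 ho
        by_cases hv : W v
        · exact ih hv
        · exact absurd (huniq (u, v) h1.1 hu hv) h1.2
    rcases hcut g with h | h
    · exact absurd (hinv h hyW) hxW
    · exact absurd (hinv h hsW) hxW
lemma conn_clos {ν G : Config d} {x : Vert d}
    (h : ∀ e, ν e = true → Conn ν e.1 x → Conn ν e.2 x → G e = true) :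
    ∀ {v w}, Conn ν v w → w = x → Conn G v x := by
  intro v w hc
  induction hc with
  | refl => rintro rfl; exact Conn.refl _
  | @step u v w ho hcc ih =>
    rintro rfl
    exact Conn.step (h (u, v) ho (Conn.step ho hcc) hcc) (ih rfl)


end AuxLemmas

/-- Inclusion (Epivsup): for `b` temporally after `b'`,
`E(b', x; C̃^{b'}(y)) ∩ {b ∈ piv(b̄', x)} ⊆ {y → x} ∘ {b' → b → x}`. -/
theorem stmt15 {d : ℕ} (b' b : Bond d) (x y : Vert d) (hb : b'.1.2 < b.1.2) :
    Eevent b' x y ∩ {ω | Pivotal ω b b'.2 x} ⊆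
      DisjOcc (connEvent y x) (bondBondConnEvent b' b x) := by
  rintro ω ⟨⟨hOb', hCx, hxA, hH4⟩, hPiv⟩
  -- hPiv : Pivotal ω b b'.2 x
  have hnot : ¬ Conn (off ω b) b'.2 x := hPiv.2
  -- b is occupied
  have hOb : ω b = true := by
    by_contra h
    exact hnot (by rw [off_self (by simpa using h)]; exact hCx)
  -- split the connection from b'.2 to x at b
  rcases conn_split (e := b) hCx with h | ⟨hρ₁, hbx⟩
  · exact absurd h hnot
  -- the cluster of y avoiding b'
  have hyA : Conn (off ω b') y x := connAvoid_iff.1 hxA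
  have hb1A : ¬ Conn (off ω b') y b.1 := fun h => hH4 b hPiv (connAvoid_iff.2 h)
  -- connections from `y` avoiding `b'` also avoid `b`
  have Kstep : ∀ v w, Conn (off ω b') v w → Conn (off ω b') y v →
      Conn (off (off ω b') b) v w := by
    intro v w h
    induction h with
    | refl => exact fun _ => Conn.refl _
    | @step u v w ho _ ih =>
      intro hyu
      by_cases he : (u, v) = b
      · exact absurd (show Conn (off ω b') y b.1 from he ▸ hyu) hb1A
      · exact Conn.step (off_of_ne he ho) (ih (hyu.snoc ho))
  have hyx2 : Conn (off (off ω b') b) y x := Kstep y x hyA (Conn.refl y)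
  -- the good subgraph
  set ν : Config d := off (off ω b') b with hν
  set ωg : Config d := pcfg {e : Bond d |
    ω e = true ∧ e ≠ b ∧ e ≠ b' ∧ Conn ν e.1 x ∧ Conn ν e.2 x} with hωg
  have hν_unfold : ∀ e : Bond d, ν e = true → ω e = true ∧ e ≠ b ∧ e ≠ b' := by
    intro e he
    have h1 := off_eq_true.1 he
    have h2 := off_eq_true.1 h1.1
    exact ⟨h2.1, h1.2, h2.2⟩
  have clos1 : ∀ {v w}, Conn ν v w → w = x → Conn ωg v x := by
    refine conn_clos fun e he h1 h2 => ?_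
    obtain ⟨he1, he2, he3⟩ := hν_unfold e he
    rw [hωg, pcfg_iff]
    exact ⟨he1, he2, he3, h1, h2⟩
  have hygy : Conn ωg y x := clos1 hyx2 rfl
  have hνb2x : Conn ν b.2 x := by
    rcases conn_split (e := b') hbx with h | ⟨_, h2⟩
    · rwa [off_comm] at h
    · exact absurd (h2.mono (off_le b')) hnot
  have hygs : Conn ωg b.2 x := clos1 hνb2x rfl
  -- no single bond cuts both connections in the good subgraph
  have starHyp : ∀ g, Conn (off ωg g) y x ∨ Conn (off ωg g) b.2 x := by
    intro g
    by_contra hcon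
    push_neg at hcon
    obtain ⟨hny, hns⟩ := hcon
    rcases conn_split (e := g) hygy with h | ⟨hyg1, _⟩
    · exact hny h
    have hg1A : Conn (off ω b') y g.1 := by
      have haux : ∀ v w, Conn (off ωg g) v w → Conn (off ω b') y v →
          Conn (off ω b') y w := by
        intro v w h
        induction h with
        | refl => exact id
        | @step u v w ho _ ih =>
          intro hyu
          have h1 : ωg (u, v) = true := off_le g _ ho
          rw [hωg, pcfg_iff] at h1
          exact ih (hyu.snoc (off_of_ne h1.2.2.1 h1.1))
      exact haux _ _ hyg1 (Conn.refl y)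
    have hpg : Pivotal ω g b'.2 x := by
      constructor
      · refine hCx.mono fun e he => ?_
        unfold flipBond
        by_cases h : e = g <;> simp [h, he]
      · intro hcg
        have hcg' : Conn (off ω g) b'.2 x := hcg
        have hng : ¬ Conn (off (off ω g) b) b'.2 x := by
          intro h
          refine hnot (h.mono fun e he => ?_)
          have h1 := off_eq_true.1 he
          have h2 := off_eq_true.1 h1.1
          exact off_of_ne h1.2 h2.1
        rcases conn_split (e := b) hcg' with h | ⟨_, h2⟩
        · exact hng h
        rcases conn_split (e := b') h2 with h3 | ⟨_, h4⟩
        · -- h3 : Conn (off (off (off ω g) b) b') b.2 x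
          have hclos : ∀ {v w}, Conn (off (off (off ω g) b) b') v w → w = x →
              Conn (off ωg g) v x := by
            refine conn_clos fun e he h1 h2 => ?_
            have u1 := off_eq_true.1 he
            have u2 := off_eq_true.1 u1.1
            have u3 := off_eq_true.1 u2.1
            have hmono : ∀ f, (off (off (off ω g) b) b') f = true → ν f = true := by
              intro f hf
              have v1 := off_eq_true.1 hf
              have v2 := off_eq_true.1 v1.1
              have v3 := off_eq_true.1 v2.1
              exact off_of_ne v2.2 (off_of_ne v1.2 v3.1)
            refine off_of_ne u3.2 ?_
            rw [hωg, pcfg_iff]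
            exact ⟨u3.1, u2.2, u1.2, (h1.mono hmono), (h2.mono hmono)⟩
          exact hns (hclos h3 rfl)
        · -- h4 : Conn _ b'.2 x
          refine hnot (h4.mono fun e he => ?_)
          have h5 := off_eq_true.1 he
          have h6 := off_eq_true.1 h5.1
          have h7 := off_eq_true.1 h6.1
          exact off_of_ne h6.2 h7.1
    exact hH4 g hpg (connAvoid_iff.2 hg1A)
  -- the two disjoint walks
  obtain ⟨L₁, L₂, hL₁, hL₂, hdisj⟩ := menger2 hygy hygs starHyp
  -- assemble the disjoint occurrence
  set R1 : Set (Bond d) := {e : Bond d |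
    ω e = true ∧ e ≠ b ∧ Conn (off ω b) b'.2 e.1 ∧ Conn (off ω b) b'.2 e.2} with hR1
  refine ⟨{e : Bond d | e ∈ L₁}, insert b' (insert b ({e : Bond d | e ∈ L₂} ∪ R1)),
    ?_, ?_, ?_⟩
  · rw [Set.disjoint_left]
    intro e he1 he2
    have hprop := pcfg_iff.1 (hL₁.mem_occ e he1)
    obtain ⟨hωe, hneb, hneb', hc1, _⟩ := hprop
    rcases he2 with rfl | he2
    · exact hneb' rfl
    rcases he2 with rfl | he2
    · exact hneb rfl
    rcases he2 with he2 | he2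
    · exact hdisj e he1 he2
    · obtain ⟨_, _, hz1, _⟩ := he2
      have hmono : ∀ f, ν f = true → (off ω b) f = true := by
        intro f hf
        obtain ⟨hf1, hf2, _⟩ := hν_unfold f hf
        exact off_of_ne hf2 hf1
      exact hnot (hz1.trans (hc1.mono hmono))
  · intro ω' hagr
    refine (hL₁.transfer fun e he => ?_).conn
    rw [hagr e he]
    exact (pcfg_iff.1 (hL₁.mem_occ e he)).1
  · intro ω' hagr
    have hb'B : b' ∈ insert b' (insert b ({e : Bond d | e ∈ L₂} ∪ R1)) :=
      Set.mem_insert _ _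
    have hbB : b ∈ insert b' (insert b ({e : Bond d | e ∈ L₂} ∪ R1)) :=
      Set.mem_insert_of_mem _ (Set.mem_insert _ _)
    refine ⟨?_, ?_, ?_, ?_⟩
    · show ω' b' = true
      rw [hagr b' hb'B]; exact hOb'
    · -- Conn ω' b'.2 b.1
      have htr : ∀ v w, Conn (off ω b) v w → Conn (off ω b) b'.2 v → Conn ω' v w := by
        intro v w h
        induction h with
        | refl => exact fun _ => Conn.refl _
        | @step u v w ho _ ih =>
          intro hzu
          have h1 := off_eq_true.1 ho
          have hmem : (u, v) ∈ insert b' (insert b ({e : Bond d | e ∈ L₂} ∪ R1)) := by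
            refine Set.mem_insert_of_mem _ (Set.mem_insert_of_mem _ (Or.inr ?_))
            exact ⟨h1.1, h1.2, hzu, hzu.snoc ho⟩
          have h2 : ω' (u, v) = true := by rw [hagr _ hmem]; exact h1.1
          exact Conn.step h2 (ih (hzu.snoc ho))
      exact htr _ _ hρ₁ (Conn.refl _)
    · show ω' b = true
      rw [hagr b hbB]; exact hOb
    · -- Conn ω' b.2 x
      refine (hL₂.transfer fun e he => ?_).conn
      have hmem : e ∈ insert b' (insert b ({e : Bond d | e ∈ L₂} ∪ R1)) :=
        Set.mem_insert_of_mem _ (Set.mem_insert_of_mem _ (Or.inl he))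
      rw [hagr e hmem]
      exact (pcfg_iff.1 (hL₂.mem_occ e he)).1
end

section
/- Let Ω be a finite set of bonds with independent Bernoulli occupation statuses, and let A, B be increasing events. If A ⊂ ⋃_u (A_u ∘ B_u ∘ C_u) for increasing events A_u, B_u, C_u, then P(A) ≤ Σ_u P(A_u) P(B_u) P(C_u). -/
open MeasureTheory
open scoped ENNReal

/-- `E` occurs on the set of bonds `B` in configuration `ω`. -/
def OccursOnGen {β : Type*} (E : Set (β → Bool)) (B : Set β) (ω : β → Bool) : Prop :=
  ∀ ω' : β → Bool, (∀ b ∈ B, ω' b = ω b) → ω' ∈ E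

/-- Triple disjoint occurrence `E₁ ∘ E₂ ∘ E₃`: the three events occur on pairwise
disjoint bond sets. -/
def DisjOcc3Gen {β : Type*} (E₁ E₂ E₃ : Set (β → Bool)) : Set (β → Bool) :=
  {ω | ∃ B₁ B₂ B₃ : Set β, Disjoint B₁ B₂ ∧ Disjoint B₁ B₃ ∧ Disjoint B₂ B₃ ∧
    OccursOnGen E₁ B₁ ω ∧ OccursOnGen E₂ B₂ ω ∧ OccursOnGen E₃ B₃ ω}

/-- `E` is an increasing event. -/
def IncreasingEvent {β : Type*} (E : Set (β → Bool)) : Prop :=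
  ∀ ω ω' : β → Bool, (∀ b, ω b ≤ ω' b) → ω ∈ E → ω' ∈ E

namespace BKaux

/-- Double disjoint occurrence. -/
def DisjOcc2 {β : Type*} (E F : Set (β → Bool)) : Set (β → Bool) :=
  {ω | ∃ S₁ S₂ : Set β, Disjoint S₁ S₂ ∧ OccursOnGen E S₁ ω ∧ OccursOnGen F S₂ ω}

variable {β : Type*}

lemma occurs_mono {E E' : Set (β → Bool)} {S : Set β} {ω} (h : E ⊆ E') (ho : OccursOnGen E S ω) :
    OccursOnGen E' S ω := fun ω' hω' => h (ho ω' hω')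

lemma disjOcc2_mono {E E' F F' : Set (β → Bool)} (hE : E ⊆ E') (hF : F ⊆ F') :
    DisjOcc2 E F ⊆ DisjOcc2 E' F' := by
  rintro ω ⟨S₁, S₂, hd, h1, h2⟩
  exact ⟨S₁, S₂, hd, occurs_mono hE h1, occurs_mono hF h2⟩

lemma disjOcc2_subset_inter {E F : Set (β → Bool)} : DisjOcc2 E F ⊆ E ∩ F := by
  rintro ω ⟨S₁, S₂, hd, h1, h2⟩
  exact ⟨h1 ω (fun _ _ => rfl), h2 ω (fun _ _ => rfl)⟩

lemma increasing_occurs {E : Set (β → Bool)} (hE : IncreasingEvent E) {S : Set β} {ω ω'}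
    (hle : ∀ b, ω b ≤ ω' b) (ho : OccursOnGen E S ω) : OccursOnGen E S ω' := by
  classical
  intro ω'' hω''
  set σ : β → Bool := fun b => if b ∈ S then ω b else ω'' b with hσ
  have hσE : σ ∈ E := ho σ (fun b hb => by simp [hσ, hb])
  refine hE σ ω'' (fun b => ?_) hσE
  by_cases hb : b ∈ S
  · simpa [hσ, hb, hω'' b hb] using hle b
  · simp [hσ, hb]

lemma increasing_disjOcc2 {E F : Set (β → Bool)} (hE : IncreasingEvent E)
    (hF : IncreasingEvent F) : IncreasingEvent (DisjOcc2 E F) := by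
  rintro ω ω' hle ⟨S₁, S₂, hd, h1, h2⟩
  exact ⟨S₁, S₂, hd, increasing_occurs hE hle h1, increasing_occurs hF hle h2⟩

lemma disjOcc3_subset {E F G : Set (β → Bool)} :
    DisjOcc3Gen E F G ⊆ DisjOcc2 E (DisjOcc2 F G) := by
  rintro ω ⟨B₁, B₂, B₃, h12, h13, h23, o1, o2, o3⟩
  refine ⟨B₁, B₂ ∪ B₃, Set.disjoint_union_right.2 ⟨h12, h13⟩, o1, ?_⟩
  intro ω' hω'
  refine ⟨B₂, B₃, h23, ?_, ?_⟩
  · intro ω'' hω''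
    exact o2 ω'' (fun b hb => (hω'' b hb).trans (hω' b (Or.inl hb)))
  · intro ω'' hω''
    exact o3 ω'' (fun b hb => (hω'' b hb).trans (hω' b (Or.inr hb)))

/-! ### Invariance and sections -/

variable [DecidableEq β]

/-- `E` does not depend on bond `b`. -/
def Inv (b : β) (E : Set (β → Bool)) : Prop :=
  ∀ (ω : β → Bool) (c : Bool), Function.update ω b c ∈ E ↔ ω ∈ E

def sect (b₀ : β) (c : Bool) (A : Set (β → Bool)) : Set (β → Bool) :=
  (fun ω => Function.update ω b₀ c) ⁻¹' A

lemma inv_sect_self (b₀ : β) (c : Bool) (A : Set (β → Bool)) : Inv b₀ (sect b₀ c A) := by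
  intro ω c'
  simp [sect, Function.update_idem]

lemma inv_sect_other {b b₀ : β} (hne : b ≠ b₀) {A : Set (β → Bool)} (hA : Inv b A)
    (c : Bool) : Inv b (sect b₀ c A) := by
  intro ω c'
  simp only [sect, Set.mem_preimage]
  rw [Function.update_comm hne]
  exact hA _ c'

lemma increasing_sect {A : Set (β → Bool)} (hA : IncreasingEvent A) (b₀ : β) (c : Bool) :
    IncreasingEvent (sect b₀ c A) := by
  intro ω ω' hle h
  refine hA _ _ (fun b => ?_) h
  by_cases hb : b = b₀
  · subst hb; simp
  · simp only [Function.update_of_ne hb]; exact hle b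

lemma sect_false_subset_true {A : Set (β → Bool)} (hA : IncreasingEvent A) (b₀ : β) :
    sect b₀ false A ⊆ sect b₀ true A := by
  intro ω h
  refine hA _ _ (fun b => ?_) h
  by_cases hb : b = b₀
  · subst hb; simp
  · simp [Function.update_of_ne hb]

lemma inv_union {b : β} {E F : Set (β → Bool)} (hE : Inv b E) (hF : Inv b F) :
    Inv b (E ∪ F) := by
  intro ω c
  simp only [Set.mem_union, hE ω c, hF ω c]

lemma inv_disjOcc2 {b₀ : β} {E F : Set (β → Bool)} (hE : Inv b₀ E) (hF : Inv b₀ F) :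
    Inv b₀ (DisjOcc2 E F) := by
  have key : ∀ (ω : β → Bool) (c : Bool), ω ∈ DisjOcc2 E F →
      Function.update ω b₀ c ∈ DisjOcc2 E F := by
    rintro ω c ⟨S₁, S₂, hd, h1, h2⟩
    refine ⟨S₁ \ {b₀}, S₂ \ {b₀}, hd.mono Set.diff_subset Set.diff_subset, ?_, ?_⟩
    · intro ω' hω'
      have : Function.update ω' b₀ (ω b₀) ∈ E := by
        refine h1 _ (fun b hb => ?_)
        by_cases hbb : b = b₀
        · subst hbb; simp
        · rw [Function.update_of_ne hbb]
          have := hω' b ⟨hb, hbb⟩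
          rwa [Function.update_of_ne hbb] at this
      exact (hE ω' (ω b₀)).1 this
    · intro ω' hω'
      have : Function.update ω' b₀ (ω b₀) ∈ F := by
        refine h2 _ (fun b hb => ?_)
        by_cases hbb : b = b₀
        · subst hbb; simp
        · rw [Function.update_of_ne hbb]
          have := hω' b ⟨hb, hbb⟩
          rwa [Function.update_of_ne hbb] at this
      exact (hF ω' (ω b₀)).1 this
  intro ω c
  constructor
  · intro h
    have := key _ (ω b₀) h
    rwa [Function.update_idem, Function.update_eq_self] at this
  · exact key ω c

lemma eq_empty_or_univ_of_inv {E : Set (β → Bool)} [Fintype β] (h : ∀ b, Inv b E) :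
    E = ∅ ∨ E = Set.univ := by
  classical
  have key : ∀ s : Finset β, ∀ ω ω' : β → Bool, (∀ b, b ∉ s → ω b = ω' b) →
      ω ∈ E → ω' ∈ E := by
    intro s
    induction s using Finset.induction_on with
    | empty =>
      intro ω ω' hd hω
      have : ω = ω' := funext fun b => hd b (Finset.notMem_empty b)
      rwa [← this]
    | @insert b s hb ih =>
      intro ω ω' hd hω
      have h1 : Function.update ω b (ω' b) ∈ E := (h b ω (ω' b)).2 hω
      refine ih _ _ (fun a ha => ?_) h1
      by_cases hab : a = b
      · subst hab; simp
      · rw [Function.update_of_ne hab]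
        exact hd a (by simp [hab, ha])
  rcases Set.eq_empty_or_nonempty E with hE | ⟨ω, hω⟩
  · exact Or.inl hE
  · right
    ext ω'
    simp only [Set.mem_univ, iff_true]
    exact key Finset.univ ω ω' (fun b hb => absurd (Finset.mem_univ b) hb) hω

lemma mem_D2_sect_false {b₀ : β} {A B : Set (β → Bool)} {ω : β → Bool}
    (hb : ω b₀ = false) (h : ω ∈ DisjOcc2 A B) :
    ω ∈ DisjOcc2 (sect b₀ false A) (sect b₀ false B) := by
  obtain ⟨S₁, S₂, hd, h1, h2⟩ := h
  refine ⟨S₁ \ {b₀}, S₂ \ {b₀}, hd.mono Set.diff_subset Set.diff_subset, ?_, ?_⟩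
  · intro ω' hω'
    show Function.update ω' b₀ false ∈ A
    refine h1 _ (fun b hbS => ?_)
    by_cases hbb : b = b₀
    · subst hbb; simp [hb]
    · rw [Function.update_of_ne hbb]
      exact hω' b ⟨hbS, hbb⟩
  · intro ω' hω'
    show Function.update ω' b₀ false ∈ B
    refine h2 _ (fun b hbS => ?_)
    by_cases hbb : b = b₀
    · subst hbb; simp [hb]
    · rw [Function.update_of_ne hbb]
      exact hω' b ⟨hbS, hbb⟩

lemma mem_D2_sect_true {b₀ : β} {A B : Set (β → Bool)} {ω : β → Bool}
    (hb : ω b₀ = true) (h : ω ∈ DisjOcc2 A B) :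
    ω ∈ DisjOcc2 (sect b₀ true A) (sect b₀ false B) ∪
      DisjOcc2 (sect b₀ false A) (sect b₀ true B) := by
  obtain ⟨S₁, S₂, hd, h1, h2⟩ := h
  by_cases hb2 : b₀ ∈ S₂
  · have hb1 : b₀ ∉ S₁ := fun hh => (Set.disjoint_left.1 hd hh) hb2
    right
    refine ⟨S₁, S₂ \ {b₀}, hd.mono le_rfl Set.diff_subset, ?_, ?_⟩
    · intro ω' hω'
      show Function.update ω' b₀ false ∈ A
      refine h1 _ (fun b hbS => ?_)
      have hbb : b ≠ b₀ := fun e => hb1 (e ▸ hbS)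
      rw [Function.update_of_ne hbb]
      exact hω' b hbS
    · intro ω' hω'
      show Function.update ω' b₀ true ∈ B
      refine h2 _ (fun b hbS => ?_)
      by_cases hbb : b = b₀
      · subst hbb; simp [hb]
      · rw [Function.update_of_ne hbb]
        exact hω' b ⟨hbS, hbb⟩
  · left
    refine ⟨S₁ \ {b₀}, S₂, (hd.mono Set.diff_subset le_rfl), ?_, ?_⟩
    · intro ω' hω'
      show Function.update ω' b₀ true ∈ A
      refine h1 _ (fun b hbS => ?_)
      by_cases hbb : b = b₀
      · subst hbb; simp [hb]
      · rw [Function.update_of_ne hbb]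
        exact hω' b ⟨hbS, hbb⟩
    · intro ω' hω'
      show Function.update ω' b₀ false ∈ B
      refine h2 _ (fun b hbS => ?_)
      have hbb : b ≠ b₀ := fun e => hb2 (e ▸ hbS)
      rw [Function.update_of_ne hbb]
      exact hω' b hbS

/-! ### Real-valued weights -/

variable [Fintype β]

noncomputable def wt (pr : β → ℝ) (ω : β → Bool) : ℝ := ∏ b, if ω b then pr b else 1 - pr b

noncomputable def W (pr : β → ℝ) (S : Set (β → Bool)) : ℝ :=
  ∑ ω : β → Bool, Set.indicator S (wt pr) ω

lemma wt_nonneg {pr : β → ℝ} (hp : ∀ b, 0 ≤ pr b ∧ pr b ≤ 1) (ω : β → Bool) : 0 ≤ wt pr ω :=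
  Finset.prod_nonneg fun b _ => by
    by_cases h : ω b <;> simp [h, (hp b).1, (hp b).2]

lemma ind_nonneg {pr : β → ℝ} (hp : ∀ b, 0 ≤ pr b ∧ pr b ≤ 1) (S : Set (β → Bool))
    (ω : β → Bool) : 0 ≤ Set.indicator S (wt pr) ω :=
  Set.indicator_nonneg (fun ω _ => wt_nonneg hp ω) ω

lemma W_nonneg {pr : β → ℝ} (hp : ∀ b, 0 ≤ pr b ∧ pr b ≤ 1) (S : Set (β → Bool)) :
    0 ≤ W pr S := Finset.sum_nonneg fun ω _ => ind_nonneg hp S ω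

lemma W_mono {pr : β → ℝ} (hp : ∀ b, 0 ≤ pr b ∧ pr b ≤ 1) {S T : Set (β → Bool)}
    (h : S ⊆ T) : W pr S ≤ W pr T := by
  refine Finset.sum_le_sum fun ω _ => ?_
  classical
  by_cases hω : ω ∈ S
  · rw [Set.indicator_of_mem hω, Set.indicator_of_mem (h hω)]
  · rw [Set.indicator_of_notMem hω]; exact ind_nonneg hp T ω

lemma W_empty (pr : β → ℝ) : W pr (∅ : Set (β → Bool)) = 0 := by
  simp [W]

lemma W_univ (pr : β → ℝ) : W pr (Set.univ : Set (β → Bool)) = 1 := by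
  classical
  have h0 : W pr Set.univ = ∑ ω : β → Bool, ∏ b, if ω b then pr b else 1 - pr b := by
    simp [W, wt]
  have h2 : ∏ b : β, (∑ c ∈ (Finset.univ : Finset Bool), (if c then pr b else 1 - pr b))
      = ∑ ω ∈ Fintype.piFinset (fun _ : β => (Finset.univ : Finset Bool)),
          ∏ b, (if ω b then pr b else 1 - pr b) := by
    rw [Finset.prod_univ_sum]
  rw [Fintype.piFinset_univ] at h2
  rw [h0, ← h2]
  have : ∀ b : β, (∑ c ∈ (Finset.univ : Finset Bool), (if c then pr b else 1 - pr b)) = 1 := by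
    intro b; simp
  simp [this]

lemma W_union_inter (pr : β → ℝ) (X Y : Set (β → Bool)) :
    W pr (X ∪ Y) + W pr (X ∩ Y) = W pr X + W pr Y := by
  classical
  rw [W, W, W, W, ← Finset.sum_add_distrib, ← Finset.sum_add_distrib]
  refine Finset.sum_congr rfl fun ω _ => ?_
  by_cases hx : ω ∈ X <;> by_cases hy : ω ∈ Y <;>
    simp [Set.indicator, hx, hy]

noncomputable def Wc (pr : β → ℝ) (b₀ : β) (c : Bool) (S : Set (β → Bool)) : ℝ :=
  ∑ ω ∈ Finset.univ.filter (fun ω : β → Bool => ω b₀ = c), Set.indicator S (wt pr) ω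

noncomputable def wres (pr : β → ℝ) (b₀ : β) (ω : β → Bool) : ℝ :=
  ∏ b ∈ Finset.univ.erase b₀, (if ω b then pr b else 1 - pr b)

lemma wt_eq_wres (pr : β → ℝ) (b₀ : β) (ω : β → Bool) :
    wt pr ω = (if ω b₀ then pr b₀ else 1 - pr b₀) * wres pr b₀ ω :=
  (Finset.mul_prod_erase Finset.univ _ (Finset.mem_univ b₀)).symm

lemma wres_update (pr : β → ℝ) (b₀ : β) (ω : β → Bool) (c : Bool) :
    wres pr b₀ (Function.update ω b₀ c) = wres pr b₀ ω := by
  refine Finset.prod_congr rfl fun b hb => ?_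
  rw [Function.update_of_ne (Finset.ne_of_mem_erase hb)]

lemma W_eq_Wc (pr : β → ℝ) (b₀ : β) (S : Set (β → Bool)) :
    W pr S = Wc pr b₀ false S + Wc pr b₀ true S := by
  classical
  rw [W, Wc, Wc, Finset.sum_filter, Finset.sum_filter, ← Finset.sum_add_distrib]
  refine Finset.sum_congr rfl fun ω _ => ?_
  by_cases h : ω b₀ <;> simp [h]

noncomputable def U (pr : β → ℝ) (b₀ : β) (E : Set (β → Bool)) : ℝ :=
  ∑ ω ∈ Finset.univ.filter (fun ω : β → Bool => ω b₀ = false),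
    Set.indicator E (wres pr b₀) ω

lemma Wc_false_eq (pr : β → ℝ) (b₀ : β) (E : Set (β → Bool)) :
    Wc pr b₀ false E = (1 - pr b₀) * U pr b₀ E := by
  classical
  rw [Wc, U, Finset.mul_sum]
  refine Finset.sum_congr rfl fun ω hω => ?_
  have hb : ω b₀ = false := by simpa using (Finset.mem_filter.1 hω).2
  by_cases hE : ω ∈ E
  · rw [Set.indicator_of_mem hE, Set.indicator_of_mem hE, wt_eq_wres pr b₀, hb]
    simp
  · simp [Set.indicator_of_notMem hE]

lemma Wc_true_eq (pr : β → ℝ) (b₀ : β) (E : Set (β → Bool)) (hInv : Inv b₀ E) :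
    Wc pr b₀ true E = pr b₀ * U pr b₀ E := by
  classical
  rw [Wc, U, Finset.mul_sum]
  refine Finset.sum_nbij' (fun ω => Function.update ω b₀ false)
    (fun ω => Function.update ω b₀ true) ?_ ?_ ?_ ?_ ?_
  · intro ω hω
    simp
  · intro ω hω
    simp
  · intro ω hω
    have hb : ω b₀ = true := by simpa using (Finset.mem_filter.1 hω).2
    show Function.update (Function.update ω b₀ false) b₀ true = ω
    rw [Function.update_idem, ← hb]
    exact Function.update_eq_self b₀ ω
  · intro ω hω
    have hb : ω b₀ = false := by simpa using (Finset.mem_filter.1 hω).2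
    show Function.update (Function.update ω b₀ true) b₀ false = ω
    rw [Function.update_idem, ← hb]
    exact Function.update_eq_self b₀ ω
  · intro ω hω
    have hb : ω b₀ = true := by simpa using (Finset.mem_filter.1 hω).2
    by_cases hE : ω ∈ E
    · have hE' : Function.update ω b₀ false ∈ E := (hInv ω false).2 hE
      rw [Set.indicator_of_mem hE, Set.indicator_of_mem hE', wres_update,
        wt_eq_wres pr b₀, hb]
      simp
    · have hE' : Function.update ω b₀ false ∉ E := fun h => hE ((hInv ω false).1 h)
      simp [Set.indicator_of_notMem hE, Set.indicator_of_notMem hE']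

lemma W_inv_eq_U (pr : β → ℝ) (b₀ : β) (E : Set (β → Bool)) (hInv : Inv b₀ E) :
    W pr E = U pr b₀ E := by
  rw [W_eq_Wc pr b₀, Wc_false_eq, Wc_true_eq pr b₀ E hInv]; ring

lemma Wc_inv_eq (pr : β → ℝ) (b₀ : β) (c : Bool) (E : Set (β → Bool)) (hInv : Inv b₀ E) :
    Wc pr b₀ c E = (if c then pr b₀ else 1 - pr b₀) * W pr E := by
  rw [W_inv_eq_U pr b₀ E hInv]
  cases c
  · simpa using Wc_false_eq pr b₀ E
  · simpa using Wc_true_eq pr b₀ E hInv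

lemma Wc_mono {pr : β → ℝ} (hp : ∀ b, 0 ≤ pr b ∧ pr b ≤ 1) (b₀ : β) (c : Bool)
    {S T : Set (β → Bool)} (h : ∀ ω : β → Bool, ω b₀ = c → ω ∈ S → ω ∈ T) :
    Wc pr b₀ c S ≤ Wc pr b₀ c T := by
  classical
  refine Finset.sum_le_sum fun ω hω => ?_
  have hb : ω b₀ = c := by simpa using (Finset.mem_filter.1 hω).2
  by_cases hS : ω ∈ S
  · rw [Set.indicator_of_mem hS, Set.indicator_of_mem (h ω hb hS)]
  · rw [Set.indicator_of_notMem hS]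
    exact Set.indicator_nonneg (fun ω _ => Finset.prod_nonneg fun b _ => by
      by_cases hh : ω b <;> simp [hh, (hp b).1, (hp b).2]) ω

lemma Wc_sect (pr : β → ℝ) (b₀ : β) (c : Bool) (A : Set (β → Bool)) :
    Wc pr b₀ c A = (if c then pr b₀ else 1 - pr b₀) * W pr (sect b₀ c A) := by
  classical
  have h1 : Wc pr b₀ c A = Wc pr b₀ c (sect b₀ c A) := by
    rw [Wc, Wc]
    refine Finset.sum_congr rfl fun ω hω => ?_
    have hbc : ω b₀ = c := by simpa using (Finset.mem_filter.1 hω).2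
    have hiff : ω ∈ sect b₀ c A ↔ ω ∈ A := by
      rw [sect, Set.mem_preimage, ← hbc, Function.update_eq_self]
    by_cases hA : ω ∈ A <;> simp [Set.indicator, hiff, hA]
  rw [h1, Wc_inv_eq pr b₀ c _ (inv_sect_self b₀ c A)]

/-! ### The BK inequality for weights -/

lemma bk_W (pr : β → ℝ) (hp : ∀ b, 0 ≤ pr b ∧ pr b ≤ 1) (T : Finset β) :
    ∀ A B : Set (β → Bool), IncreasingEvent A → IncreasingEvent B →
    (∀ b, b ∉ T → Inv b A) → (∀ b, b ∉ T → Inv b B) →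
    W pr (DisjOcc2 A B) ≤ W pr A * W pr B := by
  induction T using Finset.induction_on with
  | empty =>
    intro A B hA hB hIA hIB
    rcases eq_empty_or_univ_of_inv (fun b => hIA b (Finset.notMem_empty b)) with hE | hE
    · subst hE
      have h1 : W pr (DisjOcc2 (∅ : Set (β → Bool)) B) ≤ W pr (∅ : Set (β → Bool)) :=
        W_mono hp (disjOcc2_subset_inter.trans Set.inter_subset_left)
      rw [W_empty] at h1 ⊢
      rw [zero_mul]
      exact h1
    · subst hE
      have h1 : W pr (DisjOcc2 (Set.univ : Set (β → Bool)) B) ≤ W pr B :=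
        W_mono hp (disjOcc2_subset_inter.trans Set.inter_subset_right)
      rw [W_univ, one_mul]
      exact h1
  | @insert b₀ T' hb0 ih =>
    intro A B hA hB hIA hIB
    set q := pr b₀ with hq
    have hq0 : 0 ≤ q := (hp b₀).1
    have hq1 : q ≤ 1 := (hp b₀).2
    set A0 := sect b₀ false A
    set A1 := sect b₀ true A
    set B0 := sect b₀ false B
    set B1 := sect b₀ true B
    have hsectInv : ∀ (X : Set (β → Bool)), (∀ b, b ∉ insert b₀ T' → Inv b X) →
        ∀ c, ∀ b, b ∉ T' → Inv b (sect b₀ c X) := by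
      intro X hX c b hb
      by_cases hbe : b = b₀
      · subst hbe; exact inv_sect_self b c X
      · exact inv_sect_other hbe (hX b (by simp [hbe, hb])) c
    have d00le := ih A0 B0 (increasing_sect hA b₀ false) (increasing_sect hB b₀ false)
      (hsectInv A hIA false) (hsectInv B hIB false)
    have d10le := ih A1 B0 (increasing_sect hA b₀ true) (increasing_sect hB b₀ false)
      (hsectInv A hIA true) (hsectInv B hIB false)
    have d01le := ih A0 B1 (increasing_sect hA b₀ false) (increasing_sect hB b₀ true)
      (hsectInv A hIA false) (hsectInv B hIB true)
    have d11le := ih A1 B1 (increasing_sect hA b₀ true) (increasing_sect hB b₀ true)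
      (hsectInv A hIA true) (hsectInv B hIB true)
    -- decomposition of W A and W B
    have hWA : W pr A = (1 - q) * W pr A0 + q * W pr A1 := by
      rw [W_eq_Wc pr b₀ A, Wc_sect, Wc_sect]; simp [hq]; rfl
    have hWB : W pr B = (1 - q) * W pr B0 + q * W pr B1 := by
      rw [W_eq_Wc pr b₀ B, Wc_sect, Wc_sect]; simp [hq]; rfl
    -- bound on W (DisjOcc2 A B)
    set X := DisjOcc2 A1 B0
    set Y := DisjOcc2 A0 B1
    have hIX : Inv b₀ X := inv_disjOcc2 (inv_sect_self b₀ true A) (inv_sect_self b₀ false B)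
    have hIY : Inv b₀ Y := inv_disjOcc2 (inv_sect_self b₀ false A) (inv_sect_self b₀ true B)
    have hI00 : Inv b₀ (DisjOcc2 A0 B0) :=
      inv_disjOcc2 (inv_sect_self b₀ false A) (inv_sect_self b₀ false B)
    have hDf : Wc pr b₀ false (DisjOcc2 A B) ≤ Wc pr b₀ false (DisjOcc2 A0 B0) :=
      Wc_mono hp b₀ false (fun ω hbc h => mem_D2_sect_false hbc h)
    have hDt : Wc pr b₀ true (DisjOcc2 A B) ≤ Wc pr b₀ true (X ∪ Y) :=
      Wc_mono hp b₀ true (fun ω hbc h => mem_D2_sect_true hbc h)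
    have hWD : W pr (DisjOcc2 A B) ≤ (1 - q) * W pr (DisjOcc2 A0 B0) + q * W pr (X ∪ Y) := by
      rw [W_eq_Wc pr b₀]
      have e1 : Wc pr b₀ false (DisjOcc2 A0 B0)
          = (1 - q) * W pr (DisjOcc2 A0 B0) := by
        rw [Wc_inv_eq pr b₀ false _ hI00]; simp [hq]
      have e2 : Wc pr b₀ true (X ∪ Y) = q * W pr (X ∪ Y) := by
        rw [Wc_inv_eq pr b₀ true _ (inv_union hIX hIY)]; simp [hq]
      calc Wc pr b₀ false (DisjOcc2 A B) + Wc pr b₀ true (DisjOcc2 A B)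
          ≤ Wc pr b₀ false (DisjOcc2 A0 B0) + Wc pr b₀ true (X ∪ Y) :=
            add_le_add hDf hDt
        _ = (1 - q) * W pr (DisjOcc2 A0 B0) + q * W pr (X ∪ Y) := by rw [e1, e2]
    -- bounds on W (X ∪ Y)
    have h00sub : DisjOcc2 A0 B0 ⊆ X ∩ Y :=
      Set.subset_inter (disjOcc2_mono (sect_false_subset_true hA b₀) subset_rfl)
        (disjOcc2_mono subset_rfl (sect_false_subset_true hB b₀))
    have hXYsub : X ∪ Y ⊆ DisjOcc2 A1 B1 :=
      Set.union_subset (disjOcc2_mono subset_rfl (sect_false_subset_true hB b₀))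
        (disjOcc2_mono (sect_false_subset_true hA b₀) subset_rfl)
    have hie : W pr (X ∪ Y) + W pr (X ∩ Y) = W pr X + W pr Y := W_union_inter pr X Y
    have hxy00 : W pr (DisjOcc2 A0 B0) ≤ W pr (X ∩ Y) := W_mono hp h00sub
    have hu1 : W pr (X ∪ Y) ≤ W pr A1 * W pr B1 :=
      (W_mono hp hXYsub).trans d11le
    -- final arithmetic
    set a0 := W pr A0; set a1 := W pr A1; set b0 := W pr B0; set b1 := W pr B1
    set d00 := W pr (DisjOcc2 A0 B0)
    set d10 := W pr X; set d01 := W pr Y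
    set u := W pr (X ∪ Y)
    rw [hWA, hWB]
    have hu2 : u ≤ d10 + d01 - d00 := by linarith
    have hqq : 0 ≤ 1 - q := by linarith
    have huc : u ≤ (1 - q) * (d10 + d01 - d00) + q * (a1 * b1) := by
      have t1 : (1 - q) * u ≤ (1 - q) * (d10 + d01 - d00) :=
        mul_le_mul_of_nonneg_left hu2 hqq
      have t2 : q * u ≤ q * (a1 * b1) := mul_le_mul_of_nonneg_left hu1 hq0
      nlinarith
    have hqu : q * u ≤ q * ((1 - q) * (d10 + d01 - d00) + q * (a1 * b1)) :=
      mul_le_mul_of_nonneg_left huc hq0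
    have c1 : (1 - q) ^ 2 * d00 ≤ (1 - q) ^ 2 * (a0 * b0) :=
      mul_le_mul_of_nonneg_left d00le (sq_nonneg _)
    have c2 : q * (1 - q) * d10 ≤ q * (1 - q) * (a1 * b0) :=
      mul_le_mul_of_nonneg_left d10le (mul_nonneg hq0 hqq)
    have c3 : q * (1 - q) * d01 ≤ q * (1 - q) * (a0 * b1) :=
      mul_le_mul_of_nonneg_left d01le (mul_nonneg hq0 hqq)
    nlinarith [hWD, hqu, c1, c2, c3]


/-! ### Bridge to measures -/

section Bridge

open scoped Classical

variable {β : Type*} [Fintype β] [DecidableEq β]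

lemma measure_set_eq_sum (μ : Measure (β → Bool)) (S : Set (β → Bool)) :
    μ S = ∑ ω ∈ Finset.univ.filter (· ∈ S), μ {ω} := by
  classical
  have hS : S = ⋃ ω ∈ Finset.univ.filter (· ∈ S), ({ω} : Set (β → Bool)) := by
    ext ω; simp
  calc μ S = μ (⋃ ω ∈ Finset.univ.filter (· ∈ S), ({ω} : Set (β → Bool))) := by rw [← hS]
    _ = ∑ ω ∈ Finset.univ.filter (· ∈ S), μ {ω} :=
      measure_biUnion_finset (fun x _ y _ hxy => Set.disjoint_singleton.2 hxy)
        (fun ω _ => measurableSet_singleton ω)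

lemma toReal_measure (p : β → ℝ≥0∞) (hp : ∀ b, p b ≤ 1) (μ : Measure (β → Bool))
    (hprob : IsProbabilityMeasure μ)
    (hμ : ∀ f : β → Bool, μ {f} = ∏ b : β, (if f b then p b else 1 - p b))
    (S : Set (β → Bool)) :
    (μ S).toReal = W (fun b => (p b).toReal) S := by
  classical
  haveI := hprob
  rw [measure_set_eq_sum μ S, ENNReal.toReal_sum (fun ω _ => measure_ne_top μ _)]
  have hW : W (fun b => (p b).toReal) S
      = ∑ ω ∈ Finset.univ.filter (· ∈ S), wt (fun b => (p b).toReal) ω := by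
    simp [W, Finset.sum_filter, Set.indicator_apply]
  rw [hW]
  refine Finset.sum_congr rfl fun ω _ => ?_
  rw [hμ ω, ENNReal.toReal_prod, wt]
  refine Finset.prod_congr rfl fun b _ => ?_
  by_cases h : ω b
  · simp [h]
  · simp only [h, if_false, Bool.false_eq_true]
    rw [ENNReal.toReal_sub_of_le (hp b) (by simp)]
    simp

lemma bk_measure (p : β → ℝ≥0∞) (hp : ∀ b, p b ≤ 1) (μ : Measure (β → Bool))
    (hprob : IsProbabilityMeasure μ)
    (hμ : ∀ f : β → Bool, μ {f} = ∏ b : β, (if f b then p b else 1 - p b))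
    {A B : Set (β → Bool)} (hA : IncreasingEvent A) (hB : IncreasingEvent B) :
    μ (DisjOcc2 A B) ≤ μ A * μ B := by
  classical
  haveI := hprob
  set pr := fun b => (p b).toReal with hpr
  have hp' : ∀ b, 0 ≤ pr b ∧ pr b ≤ 1 := fun b =>
    ⟨ENNReal.toReal_nonneg, by
      simpa using ENNReal.toReal_mono (by simp) (hp b)⟩
  have key := bk_W pr hp' Finset.univ A B hA hB
    (fun b hb => absurd (Finset.mem_univ b) hb) (fun b hb => absurd (Finset.mem_univ b) hb)
  have hD := toReal_measure p hp μ hprob hμ (DisjOcc2 A B)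
  have hA' := toReal_measure p hp μ hprob hμ A
  have hB' := toReal_measure p hp μ hprob hμ B
  calc μ (DisjOcc2 A B) = ENNReal.ofReal ((μ (DisjOcc2 A B)).toReal) :=
        (ENNReal.ofReal_toReal (measure_ne_top μ _)).symm
    _ ≤ ENNReal.ofReal ((μ A).toReal * (μ B).toReal) :=
        ENNReal.ofReal_le_ofReal (by rw [hD, hA', hB']; exact key)
    _ = ENNReal.ofReal ((μ A).toReal) * ENNReal.ofReal ((μ B).toReal) :=
        ENNReal.ofReal_mul ENNReal.toReal_nonneg
    _ = μ A * μ B := by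
        rw [ENNReal.ofReal_toReal (measure_ne_top μ A), ENNReal.ofReal_toReal (measure_ne_top μ B)]

end Bridge

end BKaux

/-- Union bound combined with the BK inequality (applied twice): for a finite set of
bonds with independent Bernoulli occupation statuses and increasing events, if
`A ⊆ ⋃_u A_u ∘ B_u ∘ C_u` then `P(A) ≤ Σ_u P(A_u) P(B_u) P(C_u)`. -/
theorem stmt17 {β ι : Type*} [Fintype β] (p : β → ℝ≥0∞) (hp : ∀ b, p b ≤ 1)
    (μ : Measure (β → Bool)) (hprob : IsProbabilityMeasure μ)
    (hμ : ∀ f : β → Bool, μ {f} = ∏ b : β, (if f b then p b else 1 - p b))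
    (A : Set (β → Bool)) (A' B' C' : ι → Set (β → Bool))
    (hA : IncreasingEvent A)
    (hA' : ∀ u, IncreasingEvent (A' u)) (hB' : ∀ u, IncreasingEvent (B' u))
    (hC' : ∀ u, IncreasingEvent (C' u))
    (hsub : A ⊆ ⋃ u : ι, DisjOcc3Gen (A' u) (B' u) (C' u)) :
    μ A ≤ ∑' u : ι, μ (A' u) * μ (B' u) * μ (C' u) := by
  classical
  haveI := hprob
  set Su : ι → Set (β → Bool) := fun u => DisjOcc3Gen (A' u) (B' u) (C' u) with hSu
  have hu : ∀ u, μ (Su u) ≤ μ (A' u) * μ (B' u) * μ (C' u) := by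
    intro u
    calc μ (Su u) ≤ μ (BKaux.DisjOcc2 (A' u) (BKaux.DisjOcc2 (B' u) (C' u))) :=
          measure_mono BKaux.disjOcc3_subset
      _ ≤ μ (A' u) * μ (BKaux.DisjOcc2 (B' u) (C' u)) :=
          BKaux.bk_measure p hp μ hprob hμ (hA' u)
            (BKaux.increasing_disjOcc2 (hB' u) (hC' u))
      _ ≤ μ (A' u) * (μ (B' u) * μ (C' u)) :=
          mul_le_mul_right (BKaux.bk_measure p hp μ hprob hμ (hB' u) (hC' u)) _
      _ = μ (A' u) * μ (B' u) * μ (C' u) := (mul_assoc _ _ _).symm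
  rcases isEmpty_or_nonempty ι with hι | hι
  · have : (⋃ u : ι, Su u) = ∅ := Set.iUnion_of_empty Su
    have hA0 : μ A ≤ 0 := by
      calc μ A ≤ μ (⋃ u : ι, Su u) := measure_mono hsub
        _ = 0 := by rw [this, measure_empty]
    exact hA0.trans zero_le
  · set c : (β → Bool) → ι := fun ω =>
      if h : ∃ u, ω ∈ Su u then h.choose else Classical.arbitrary ι with hc
    set F : Finset ι := (Finset.univ.filter (· ∈ ⋃ u, Su u)).image c with hF
    have hcover : (⋃ u, Su u) ⊆ ⋃ u ∈ F, Su u := by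
      intro ω hω
      obtain ⟨u, hu'⟩ := Set.mem_iUnion.1 hω
      have hex : ∃ u, ω ∈ Su u := ⟨u, hu'⟩
      have h1 : ω ∈ Su (c ω) := by
        rw [hc]; simp only [hex, dif_pos]; exact hex.choose_spec
      have h2 : c ω ∈ F := Finset.mem_image.2 ⟨ω, Finset.mem_filter.2 ⟨Finset.mem_univ _, hω⟩, rfl⟩
      exact Set.mem_biUnion h2 h1
    calc μ A ≤ μ (⋃ u ∈ F, Su u) := measure_mono (hsub.trans hcover)
      _ ≤ ∑ u ∈ F, μ (Su u) := measure_biUnion_finset_le F Su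
      _ ≤ ∑ u ∈ F, μ (A' u) * μ (B' u) * μ (C' u) := Finset.sum_le_sum fun u _ => hu u
      _ ≤ ∑' u : ι, μ (A' u) * μ (B' u) * μ (C' u) := ENNReal.sum_le_tsum F
end
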